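/- arXiv:1205.0445 — 2 statements merged into one kernel-verified Lean document; each statement's English description precedes it below -/
import Mathlib

section
/- Let B be a nonempty subset of E, η ∈ E ∖ B, and D ⊆ E. Then E_η[ Σ_{n=0}^{ℍ_B − 1} 1{Y_n ∈ D}/λ(Y_n) ] ≤ μ(D) / Cap({η}, B); that is, the expected time the continuous-time chain started at η spends in D before hitting B is at most μ(D)/Cap({η},B). -/
open scoped Classical
open Filter Topology
open scoped ENNReal

noncomputable section

/-- The weight of the discrete-time path `γ` (consisting of `n` steps) under the transition
kernel `p`: the probability that the chain started at `γ 0` follows exactly this path. -/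
def pathWeight {E : Type*} (p : E → E → ℝ) {n : ℕ} (γ : Fin (n + 1) → E) : ℝ :=
  ∏ i : Fin n, p (γ i.castSucc) (γ i.succ)

/-- `retProb p η S T` is the probability that the chain with transition kernel `p` started at
`η` enters the set `S` at some positive time, and does so for the first time at a state
belonging to `T`.  For `T ⊆ S` this is `P_η[ℍ⁺_S < ∞ and Y_{ℍ⁺_S} ∈ T]`; for disjoint sets
`A`, `B`, taking `S = A ∪ B`, `T = B` gives `P_η[ℍ⁺_B < ℍ⁺_A]`.  It is written as a sum over
all finite paths. -/
def retProb {E : Type*} (p : E → E → ℝ) (η : E) (S T : Set E) : ℝ :=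
  ∑' x : Σ n : ℕ, Fin (n + 2) → E,
    if x.2 0 = η ∧ (∀ j : Fin (x.1 + 2), 0 < (j : ℕ) → (j : ℕ) < x.1 + 1 → x.2 j ∉ S) ∧
        x.2 (Fin.last (x.1 + 1)) ∈ T
      then pathWeight p x.2 else 0

/-- `hitProb p η A B = P_η[ℍ_A < ℍ_B]`: the probability that the chain with kernel `p`
started at `η` hits `A` (a hit at time `0` being allowed) strictly before hitting `B`,
written as a sum over all finite paths which stay outside `A ∪ B` before ending in `A`. -/
def hitProb {E : Type*} (p : E → E → ℝ) (η : E) (A B : Set E) : ℝ :=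
  ∑' x : Σ n : ℕ, Fin (n + 1) → E,
    if x.2 0 = η ∧ (∀ j : Fin (x.1 + 1), (j : ℕ) < x.1 → x.2 j ∉ A ∪ B) ∧
        x.2 (Fin.last x.1) ∈ A
      then pathWeight p x.2 else 0

/-- The capacity `Cap(A,B) = Σ_{η ∈ A} M(η) P_η[ℍ⁺_B < ℍ⁺_A]` between two disjoint sets,
for the chain with jump kernel `p` and invariant measure `M` of the jump chain. -/
def cap {E : Type*} (p : E → E → ℝ) (M : E → ℝ) (A B : Set E) : ℝ :=
  ∑' η : A, M η.1 * retProb p η.1 (A ∪ B) B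

/-- The jump probabilities `p(η,ξ) = R(η,ξ)/λ(η)`, `λ(η) = -R(η,η)`, of a rate matrix `R`. -/
def jumpProb {E : Type*} (R : E → E → ℝ) (η ξ : E) : ℝ :=
  if η = ξ then 0 else R η ξ / (-R η η)

/-- Irreducibility of a discrete-time chain: any two states are joined by a path of
positive probability. -/
def MCIrreducible {E : Type*} (p : E → E → ℝ) : Prop :=
  ∀ η ξ : E, ∃ (n : ℕ) (γ : Fin (n + 1) → E),
    γ 0 = η ∧ γ (Fin.last n) = ξ ∧ 0 < pathWeight p γ

/-- `R` is a rate matrix: nonnegative off-diagonal entries, finite strictly positive holding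
rates `λ(η) = -R(η,η)`, and rows summing to zero. -/
structure IsRateMatrix {E : Type*} (R : E → E → ℝ) : Prop where
  offdiag_nonneg : ∀ η ξ, η ≠ ξ → 0 ≤ R η ξ
  diag_neg : ∀ η, R η η < 0
  row_summable : ∀ η, Summable (R η)
  row_sum : ∀ η, ∑' ξ, R η ξ = 0

/-- `μ` is a stationary probability measure for the rate matrix `R`, charging every point,
with summable holding rates:  `Σ_η λ(η) μ(η) < ∞`. -/
structure IsRateStationary {E : Type*} (R : E → E → ℝ) (μ : E → ℝ) : Prop where
  pos : ∀ η, 0 < μ η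
  summable : Summable μ
  total : ∑' η, μ η = 1
  flux_summable : ∀ ξ, Summable fun η => μ η * R η ξ
  stat : ∀ ξ, ∑' η, μ η * R η ξ = 0
  lam_summable : Summable fun η => -R η η * μ η

/-- The adjoint rates `R*(η,ξ) = μ(ξ) R(ξ,η) / μ(η)` (same holding rates). -/
def adjRate {E : Type*} (R : E → E → ℝ) (μ : E → ℝ) (η ξ : E) : ℝ :=
  if η = ξ then R η η else μ ξ * R ξ η / μ η

/-- The expected time `E_η[ Σ_{n=0}^{ℍ_B − 1} 1{Y_n ∈ D}/λ(Y_n) ]` spent in `D` by the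
continuous-time chain (jump kernel `p`, holding rates `lam`) started at `η` before
hitting `B`, as an `ℝ≥0∞`-valued sum over all finite paths staying outside `B`. -/
def occupationTime {E : Type*} (p : E → E → ℝ) (lam : E → ℝ) (D B : Set E) (η : E) : ℝ≥0∞ :=
  ∑' x : Σ n : ℕ, Fin (n + 1) → E,
    ENNReal.ofReal
      ((if x.2 0 = η ∧ (∀ j, x.2 j ∉ B) ∧ x.2 (Fin.last x.1) ∈ D then pathWeight p x.2 else 0)
        / lam (x.2 (Fin.last x.1)))

namespace Occ
variable {E : Type*}

def wre (p : E → E → ℝ) : E → List E → ℝ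
  | _, [] => 1
  | a, b :: l => p a b * wre p b l

lemma wre_nonneg {p : E → E → ℝ} (hp : ∀ a b, 0 ≤ p a b) (a : E) (l : List E) :
    0 ≤ wre p a l := by
  induction l generalizing a with
  | nil => exact zero_le_one
  | cons b l ih => exact mul_nonneg (hp a b) (ih b)

def wt (p : E → E → ℝ) (a : E) (l : List E) : ℝ≥0∞ := ENNReal.ofReal (wre p a l)

lemma wt_nil (p : E → E → ℝ) (a : E) : wt p a [] = 1 := by simp [wt, wre]

lemma wt_cons {p : E → E → ℝ} (hp : ∀ a b, 0 ≤ p a b) (a b : E) (l : List E) :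
    wt p a (b :: l) = ENNReal.ofReal (p a b) * wt p b l := by
  simp [wt, wre, ENNReal.ofReal_mul (hp a b)]

lemma wre_append (p : E → E → ℝ) (a : E) (u v : List E) :
    wre p a (u ++ v) = wre p a u * wre p (u.getLastD a) v := by
  induction u generalizing a with
  | nil => simp [wre]
  | cons b u ih => rw [List.cons_append, wre, wre, ih b, List.getLastD_cons, mul_assoc]

lemma wt_append {p : E → E → ℝ} (hp : ∀ a b, 0 ≤ p a b) (a : E) (u v : List E) :
    wt p a (u ++ v) = wt p a u * wt p (u.getLastD a) v := by
  simp [wt, wre_append, ENNReal.ofReal_mul (wre_nonneg hp a u)]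

def tup (a : E) (l : List E) : Fin (l.length + 1) → E := fun j => (a :: l).getD (j : ℕ) a

@[simp] lemma tup_zero (a : E) (l : List E) : tup a l 0 = a := rfl

lemma tup_succ (a b : E) (l : List E) (j : Fin (l.length + 1)) :
    tup a (b :: l) j.succ = tup b l j := by
  have hj : (j : ℕ) < (b :: l).length := j.2
  simp [tup, List.getD_cons_succ, List.getD_eq_getElem _ _ hj, List.getElem?_eq_getElem hj]

lemma pathWeight_tup (p : E → E → ℝ) (a : E) (l : List E) :
    pathWeight p (tup a l) = wre p a l := by
  induction l generalizing a with
  | nil => simp [pathWeight, wre]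
  | cons b l ih =>
    rw [wre, ← ih b]
    show (∏ i : Fin (l.length + 1), p (tup a (b :: l) i.castSucc) (tup a (b :: l) i.succ)) = _
    rw [Fin.prod_univ_succ]
    have h0 : p (tup a (b :: l) (Fin.castSucc (0 : Fin (l.length + 1))))
        (tup a (b :: l) (0 : Fin (l.length + 1)).succ) = p a b := by
      rw [tup_succ]; simp [tup]
    have h1 : (∏ i : Fin l.length,
        p (tup a (b :: l) i.succ.castSucc) (tup a (b :: l) i.succ.succ))
        = pathWeight p (tup b l) := by
      apply Finset.prod_congr rfl
      intro i _
      rw [← Fin.succ_castSucc, tup_succ, tup_succ]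
    rw [h0, h1]


lemma getLast_cons' (a : E) (l : List E) :
    (a :: l).getLast (List.cons_ne_nil a l) = l.getLastD a := by
  induction l generalizing a with
  | nil => simp
  | cons b l ih => rw [List.getLast_cons (List.cons_ne_nil b l), ih b, List.getLastD_cons]

lemma tup_val (a : E) (l : List E) (j : Fin (l.length + 1)) :
    tup a l j = (a :: l)[(j : ℕ)]'(by simpa using j.2) := by
  exact List.getD_eq_getElem _ _ (by simpa using j.2)

lemma tup_last (a : E) (l : List E) : tup a l (Fin.last l.length) = l.getLastD a := by
  rw [tup_val, ← getLast_cons' a l, List.getLast_eq_getElem]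
  simp

lemma forall_tup (Q : E → Prop) (a : E) (l : List E) :
    (∀ j, Q (tup a l j)) ↔ ∀ y ∈ a :: l, Q y := by
  constructor
  · intro h y hy
    obtain ⟨i, hi, rfl⟩ := List.mem_iff_getElem.1 hy
    have hi' : i < l.length + 1 := by simpa using hi
    have := h ⟨i, hi'⟩
    rwa [tup_val] at this
  · intro h j
    rw [tup_val]
    exact h _ (List.getElem_mem _)

def pathEquiv : (E × List E) ≃ (Σ n : ℕ, Fin (n + 1) → E) where
  toFun x := ⟨x.2.length, tup x.1 x.2⟩
  invFun x := (x.2 0, List.ofFn fun i : Fin x.1 => x.2 i.succ)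
  left_inv := by
    rintro ⟨a, l⟩
    simp only [tup]
    refine Prod.ext rfl ?_
    simp only
    have : (fun i : Fin l.length => (a :: l).getD ((i.succ : Fin (l.length+1)) : ℕ) a) = l.get := by
      funext i
      have : ((i.succ : Fin (l.length+1)) : ℕ) = (i : ℕ) + 1 := rfl
      rw [this, List.getD_cons_succ, List.getD_eq_getElem _ _ i.2, List.get_eq_getElem]
    rw [this, List.ofFn_get]
  right_inv := by
    rintro ⟨n, γ⟩
    show (⟨(List.ofFn fun i : Fin n => γ i.succ).length,
        tup (γ 0) (List.ofFn fun i : Fin n => γ i.succ)⟩ : Σ n : ℕ, Fin (n + 1) → E) = ⟨n, γ⟩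
    have hl : (List.ofFn fun i : Fin n => γ i.succ).length = n := List.length_ofFn
    refine Sigma.ext hl ?_
    dsimp only
    rw [Fin.heq_fun_iff (congrArg (· + 1) hl)]
    intro j
    rw [tup_val]
    rcases j with ⟨jv, hj⟩
    match jv, hj with
    | 0, hj => simp
    | (k+1), hj =>
      have hk : k < n := by have h2 := hj; simp only [hl] at h2; omega
      simp only [List.getElem_cons_succ]
      rw [List.getElem_ofFn]
      exact congrArg γ (Fin.ext rfl)


def pathEquiv2 : (E × E × List E) ≃ (Σ n : ℕ, Fin (n + 2) → E) where
  toFun x := ⟨x.2.2.length, tup x.1 (x.2.1 :: x.2.2)⟩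
  invFun x := (x.2 0, x.2 1, List.ofFn fun i : Fin x.1 => x.2 i.succ.succ)
  left_inv := by
    rintro ⟨a, b, l⟩
    refine Prod.ext rfl (Prod.ext rfl ?_)
    simp only
    have : (fun i : Fin l.length => tup a (b :: l) i.succ.succ) = l.get := by
      funext i
      have h2 : ((i.succ.succ : Fin (l.length + 2)) : ℕ) = (i : ℕ) + 2 := rfl
      show (a :: b :: l).getD ((i.succ.succ : Fin (l.length + 2)) : ℕ) a = _
      rw [h2, List.getD_cons_succ, List.getD_cons_succ, List.getD_eq_getElem _ _ i.2,
        List.get_eq_getElem]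
    rw [this, List.ofFn_get]
  right_inv := by
    rintro ⟨n, γ⟩
    show (⟨(List.ofFn fun i : Fin n => γ i.succ.succ).length,
        tup (γ 0) (γ 1 :: List.ofFn fun i : Fin n => γ i.succ.succ)⟩ :
        Σ n : ℕ, Fin (n + 2) → E) = ⟨n, γ⟩
    have hl : (List.ofFn fun i : Fin n => γ i.succ.succ).length = n := List.length_ofFn
    refine Sigma.ext hl ?_
    dsimp only
    rw [Fin.heq_fun_iff (show ((γ 1 :: List.ofFn fun i : Fin n => γ i.succ.succ).length + 1)
      = n + 2 by simp [hl])]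
    intro j
    rw [tup_val]
    rcases j with ⟨jv, hj⟩
    match jv, hj with
    | 0, hj => simp
    | 1, hj => simp
    | (k+2), hj =>
      have hk : k < n := by have h2 := hj; simp only [List.length_cons, hl] at h2; omega
      simp only [List.getElem_cons_succ]
      rw [List.getElem_ofFn]
      exact congrArg γ (Fin.ext rfl)


section antichain
variable {p : E → E → ℝ}

def Antichain (S : Set (List E)) : Prop := ∀ u ∈ S, ∀ v ∈ S, u <+: v → u = v

lemma massN (hp : ∀ a b, 0 ≤ p a b)
    (hrow : ∀ a, (∑' b : E, ENNReal.ofReal (p a b)) ≤ 1) (N : ℕ) : ∀ (a : E) (S : Set (List E)), Antichain S →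
    (∑' l : List E, S.indicator (fun l => if l.length ≤ N then wt p a l else 0) l) ≤ 1 := by
  induction N with
  | zero =>
    intro a S hS
    by_cases h0 : [] ∈ S
    · have hsub : ∀ l ∈ S, l = [] := fun l hl => (hS [] h0 l hl (List.nil_prefix)).symm
      have : (∑' l : List E, S.indicator (fun l => if l.length ≤ 0 then wt p a l else 0) l)
          = S.indicator (fun l => if l.length ≤ 0 then wt p a l else 0) [] := by
        apply tsum_eq_single
        intro l hl
        by_cases hlS : l ∈ S
        · exact absurd (hsub l hlS) hl
        · simp [Set.indicator_of_notMem hlS]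
      rw [this, Set.indicator_of_mem h0]
      simp [wt_nil]
    · have : ∀ l : List E, S.indicator (fun l => if l.length ≤ 0 then wt p a l else 0) l = 0 := by
        intro l
        by_cases hlS : l ∈ S
        · rw [Set.indicator_of_mem hlS]
          have : l ≠ [] := fun h => h0 (h ▸ hlS)
          simp [List.length_eq_zero_iff, this]
        · simp [Set.indicator_of_notMem hlS]
      calc (∑' l : List E, S.indicator (fun l => if l.length ≤ 0 then wt p a l else 0) l)
          = ∑' _ : List E, (0 : ℝ≥0∞) := tsum_congr this
        _ ≤ 1 := by simp
  | succ N ih =>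
    intro a S hS
    by_cases h0 : [] ∈ S
    · have hsub : ∀ l ∈ S, l = [] := fun l hl => (hS [] h0 l hl (List.nil_prefix)).symm
      have : (∑' l : List E, S.indicator (fun l => if l.length ≤ N + 1 then wt p a l else 0) l)
          = S.indicator (fun l => if l.length ≤ N + 1 then wt p a l else 0) [] := by
        apply tsum_eq_single
        intro l hl
        by_cases hlS : l ∈ S
        · exact absurd (hsub l hlS) hl
        · simp [Set.indicator_of_notMem hlS]
      rw [this, Set.indicator_of_mem h0]
      simp [wt_nil]
    · set f : List E → ℝ≥0∞ :=
        S.indicator (fun l => if l.length ≤ N + 1 then wt p a l else 0) with hf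
      have hnil : f [] = 0 := Set.indicator_of_notMem h0 _
      have hinj : Function.Injective (fun x : E × List E => x.1 :: x.2) := by
        rintro ⟨b, t⟩ ⟨b', t'⟩ h
        simpa [Prod.ext_iff] using h
      have hrange : Function.support f ⊆ Set.range (fun x : E × List E => x.1 :: x.2) := by
        intro l hl
        match l with
        | [] => exact absurd hnil hl
        | b :: t => exact ⟨(b, t), rfl⟩
      have step : (∑' l : List E, f l) = ∑' x : E × List E, f (x.1 :: x.2) :=
        (Function.Injective.tsum_eq hinj hrange).symm
      rw [step]
      have key : ∀ x : E × List E, f (x.1 :: x.2) = ENNReal.ofReal (p a x.1) *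
          ({t | x.1 :: t ∈ S}.indicator
            (fun t => if t.length ≤ N then wt p x.1 t else 0) x.2) := by
        rintro ⟨b, t⟩
        by_cases hbt : b :: t ∈ S
        · rw [hf, Set.indicator_of_mem hbt, Set.indicator_of_mem (by exact hbt)]
          simp only [List.length_cons, add_le_add_iff_right]
          by_cases hlen : t.length ≤ N
          · simp [hlen, wt_cons hp]
          · simp [hlen]
        · rw [hf, Set.indicator_of_notMem hbt, Set.indicator_of_notMem (by exact hbt)]
          simp
      calc (∑' x : E × List E, f (x.1 :: x.2))
          = ∑' b : E, ∑' t : List E, ENNReal.ofReal (p a b) *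
              ({t | b :: t ∈ S}.indicator
                (fun t => if t.length ≤ N then wt p b t else 0) t) := by
            rw [← ENNReal.tsum_prod]
            exact tsum_congr key
        _ ≤ ∑' b : E, ENNReal.ofReal (p a b) * 1 := by
            apply ENNReal.tsum_le_tsum
            intro b
            rw [ENNReal.tsum_mul_left]
            apply mul_le_mul_right
            apply ih b
            intro u hu v hv huv
            have := hS _ hu _ hv (List.cons_prefix_cons.mpr ⟨rfl, huv⟩)
            simpa using this
        _ ≤ 1 := by simpa using hrow a

lemma mass_antichain (hp : ∀ a b, 0 ≤ p a b)
    (hrow : ∀ a, (∑' b : E, ENNReal.ofReal (p a b)) ≤ 1) (a : E) (S : Set (List E)) (hS : Antichain S) :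
    (∑' l : List E, S.indicator (wt p a) l) ≤ 1 := by
  rw [ENNReal.tsum_eq_iSup_sum]
  apply iSup_le
  intro F
  set N := F.sup List.length with hN
  calc (∑ l ∈ F, S.indicator (wt p a) l)
      = ∑ l ∈ F, S.indicator (fun l => if l.length ≤ N then wt p a l else 0) l := by
        apply Finset.sum_congr rfl
        intro l hl
        have : l.length ≤ N := Finset.le_sup hl
        by_cases hlS : l ∈ S
        · simp [Set.indicator_of_mem hlS, this]
        · simp [Set.indicator_of_notMem hlS]
    _ ≤ ∑' l : List E, S.indicator (fun l => if l.length ≤ N then wt p a l else 0) l :=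
        ENNReal.sum_le_tsum F
    _ ≤ 1 := massN hp hrow N a S hS

end antichain

def revP (x : E × List E) : E × List E :=
  (x.2.getLastD x.1, ((x.1 :: x.2).dropLast).reverse)

lemma points_revP (x : E × List E) :
    (revP x).1 :: (revP x).2 = (x.1 :: x.2).reverse := by
  rcases x with ⟨a, l⟩
  have h : (a :: l).dropLast ++ [(a :: l).getLast (List.cons_ne_nil a l)] = a :: l :=
    List.dropLast_append_getLast _
  conv_rhs => rw [← h]
  rw [List.reverse_append, getLast_cons']
  rfl

lemma revP_involutive : Function.Involutive (revP (E := E)) := by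
  intro x
  have h1 := points_revP (revP x)
  rw [points_revP x, List.reverse_reverse] at h1
  rcases x with ⟨a, l⟩
  exact Prod.ext (List.head_eq_of_cons_eq h1) (List.tail_eq_of_cons_eq h1)

/-- reversal of weights w.r.t. an "adjoint" kernel. -/
lemma wre_rev {p q : E → E → ℝ} {M : E → ℝ} (hrel : ∀ a b, M a * p a b = M b * q b a) :
    ∀ (l : List E) (a : E),
      M a * wre p a l = M (l.getLastD a) * wre q (l.getLastD a) ((a :: l).dropLast.reverse) := by
  intro l
  induction l with
  | nil => intro a; simp [wre]
  | cons b l ih =>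
    intro a
    have hback : ((b :: l).dropLast.reverse).getLastD (l.getLastD b) = b := by
      cases l with
      | nil => simp
      | cons c l' =>
        rw [List.dropLast_cons₂, List.reverse_cons]
        simp [List.getLastD_concat]
    have hdl : (a :: b :: l).dropLast.reverse = (b :: l).dropLast.reverse ++ [a] := by
      rw [List.dropLast_cons₂, List.reverse_cons]
    rw [List.getLastD_cons, hdl, wre_append, hback]
    calc M a * wre p a (b :: l) = (M a * p a b) * wre p b l := by rw [wre]; ring
      _ = q b a * (M b * wre p b l) := by rw [hrel a b]; ring
      _ = q b a * (M (l.getLastD b) * wre q (l.getLastD b) ((b :: l).dropLast.reverse)) := by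
          rw [ih b]
      _ = M (l.getLastD b) *
          (wre q (l.getLastD b) ((b :: l).dropLast.reverse) * wre q b [a]) := by
          rw [show wre q b [a] = q b a * 1 from rfl]; ring


section kernel
variable {R : E → E → ℝ} {μ : E → ℝ} (hR : IsRateMatrix R) (hμ : IsRateStationary R μ)

lemma lam_pos (hR : IsRateMatrix R) (a : E) : 0 < -R a a := by
  have := hR.diag_neg a; linarith

lemma jp_nonneg (hR : IsRateMatrix R) : ∀ a b, 0 ≤ jumpProb R a b := by
  intro a b
  unfold jumpProb
  by_cases h : a = b
  · simp [h]
  · rw [if_neg h]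
    exact div_nonneg (hR.offdiag_nonneg a b h) (le_of_lt (lam_pos hR a))

/-- `M` : invariant measure of the jump chain. -/
def MM (R : E → E → ℝ) (μ : E → ℝ) (a : E) : ℝ := -R a a * μ a

lemma MM_pos (hR : IsRateMatrix R) (hμ : IsRateStationary R μ) (a : E) : 0 < MM R μ a :=
  mul_pos (lam_pos hR a) (hμ.pos a)

lemma row_summable_jp (hR : IsRateMatrix R) (a : E) : Summable (jumpProb R a) := by
  have h1 : Summable (fun b => R a b / (-R a a)) := (hR.row_summable a).div_const _
  have h2 : jumpProb R a = Function.update (fun b => R a b / (-R a a)) a 0 := by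
    funext b
    rw [Function.update_apply]
    unfold jumpProb
    by_cases h : a = b
    · simp [h]
    · rw [if_neg h, if_neg (Ne.symm h)]
  rw [h2]
  exact h1.update a 0

lemma row_sum_jp (hR : IsRateMatrix R) (a : E) : ∑' b, jumpProb R a b = 1 := by
  have hlam := lam_pos hR a
  have h1 : Summable (fun b => R a b / (-R a a)) := (hR.row_summable a).div_const _
  have h2 : ∑' b, R a b / (-R a a) = 0 := by
    rw [tsum_div_const, hR.row_sum a, zero_div]
  have h3 := Summable.tsum_eq_add_tsum_ite h1 a
  rw [h2] at h3
  have h4 : ∑' b, (if b = a then 0 else R a b / (-R a a)) = - (R a a / (-R a a)) := by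
    linarith
  have h5 : ∀ b, jumpProb R a b = (if b = a then 0 else R a b / (-R a a)) := by
    intro b
    unfold jumpProb
    by_cases h : a = b
    · simp [h]
    · rw [if_neg h, if_neg (Ne.symm h)]
  rw [tsum_congr h5, h4]
  field_simp
  exact div_self (hR.diag_neg a).ne

lemma row_sum_jp_enn (hR : IsRateMatrix R) (a : E) :
    (∑' b : E, ENNReal.ofReal (jumpProb R a b)) ≤ 1 := by
  rw [← ENNReal.ofReal_tsum_of_nonneg (jp_nonneg hR a) (row_summable_jp hR a), row_sum_jp hR a]
  simp

/-- the adjoint jump kernel. -/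
def pstar (R : E → E → ℝ) (μ : E → ℝ) (a b : E) : ℝ :=
  MM R μ b * jumpProb R b a / MM R μ a

lemma pstar_nonneg (hR : IsRateMatrix R) (hμ : IsRateStationary R μ) :
    ∀ a b, 0 ≤ pstar R μ a b := fun a b =>
  div_nonneg (mul_nonneg (le_of_lt (MM_pos hR hμ b)) (jp_nonneg hR b a))
    (le_of_lt (MM_pos hR hμ a))

lemma hrel_jp (hR : IsRateMatrix R) (hμ : IsRateStationary R μ) (a b : E) :
    MM R μ a * jumpProb R a b = MM R μ b * pstar R μ b a := by
  rw [pstar]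
  field_simp [ne_of_gt (MM_pos hR hμ b)]

lemma hrel_star (hR : IsRateMatrix R) (hμ : IsRateStationary R μ) (a b : E) :
    MM R μ a * pstar R μ a b = MM R μ b * jumpProb R b a := by
  rw [pstar]
  field_simp [ne_of_gt (MM_pos hR hμ a)]

lemma MM_jp_eq (hR : IsRateMatrix R) (hμ : IsRateStationary R μ) (a b : E) :
    MM R μ b * jumpProb R b a = if b = a then 0 else μ b * R b a := by
  unfold jumpProb MM
  by_cases h : b = a
  · simp [h]
  · rw [if_neg h, if_neg h]
    have hpos := lam_pos hR b
    calc (-R b b * μ b) * (R b a / (-R b b)) = (μ b * R b a) * (-R b b / -R b b) := by ring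
      _ = μ b * R b a := by rw [div_self (ne_of_gt hpos), mul_one]

lemma col_summable (hR : IsRateMatrix R) (hμ : IsRateStationary R μ) (a : E) :
    Summable (fun b => MM R μ b * jumpProb R b a) := by
  have h1 : (fun b => MM R μ b * jumpProb R b a)
      = Function.update (fun b => μ b * R b a) a 0 := by
    funext b
    rw [Function.update_apply, MM_jp_eq hR hμ]
  rw [h1]
  exact (hμ.flux_summable a).update a 0

lemma col_sum (hR : IsRateMatrix R) (hμ : IsRateStationary R μ) (a : E) :
    ∑' b, MM R μ b * jumpProb R b a = MM R μ a := by
  have h3 := Summable.tsum_eq_add_tsum_ite (hμ.flux_summable a) a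
  rw [hμ.stat a] at h3
  rw [tsum_congr (fun b => MM_jp_eq hR hμ a b)]
  have : ∑' b, (if b = a then 0 else μ b * R b a) = - (μ a * R a a) := by linarith
  rw [this, MM]
  ring

lemma row_summable_star (hR : IsRateMatrix R) (hμ : IsRateStationary R μ) (a : E) :
    Summable (pstar R μ a) := (col_summable hR hμ a).div_const _

lemma row_sum_star_enn (hR : IsRateMatrix R) (hμ : IsRateStationary R μ) (a : E) :
    (∑' b : E, ENNReal.ofReal (pstar R μ a b)) ≤ 1 := by
  rw [← ENNReal.ofReal_tsum_of_nonneg (pstar_nonneg hR hμ a) (row_summable_star hR hμ a)]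
  have : ∑' b, pstar R μ a b = 1 := by
    unfold pstar
    rw [tsum_div_const, col_sum hR hμ a, div_self (ne_of_gt (MM_pos hR hμ a))]
  rw [this]
  simp

end kernel


section main
variable {p q : E → E → ℝ}

lemma getLastD_mem : ∀ (l : List E) (d : E), l ≠ [] → l.getLastD d ∈ l := by
  intro l
  induction l with
  | nil => simp
  | cons b l ih =>
    intro d _
    rw [List.getLastD_cons]
    cases l with
    | nil => simp
    | cons c t => exact List.mem_cons_of_mem b (ih c (List.cons_ne_nil c t))

lemma getLastD_append' (u : List E) {w : List E} (d d' : E) (hw : w ≠ []) :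
    (u ++ w).getLastD d = w.getLastD d' := by
  induction u generalizing d with
  | nil =>
    cases w with
    | nil => exact absurd rfl hw
    | cons c t => rw [List.nil_append, List.getLastD_cons, List.getLastD_cons]
  | cons a u ih => rw [List.cons_append, List.getLastD_cons, ih a]

lemma getLast?_cons' (a : E) (l : List E) : (a :: l).getLast? = some (l.getLastD a) := by
  induction l generalizing a with
  | nil => simp
  | cons b l ih => rw [List.getLast?_cons_cons, ih b, List.getLastD_cons]

/-- Condition: path from `α` with tail `l` stays outside `B` and ends at `β`. -/
def Gc (B : Set E) (α β : E) (l : List E) : Prop :=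
  (∀ y ∈ α :: l, y ∉ B) ∧ l.getLastD α = β

def Gfun (p : E → E → ℝ) (B : Set E) (α β : E) : ℝ≥0∞ :=
  ∑' l : {l : List E // Gc B α β l}, wt p α l.1

/-- Condition: first-hit path of `η` from `α`, avoiding `B`. -/
def Hc (B : Set E) (η α : E) (l : List E) : Prop :=
  (∀ y ∈ α :: l, y ∉ B) ∧ (∀ y ∈ (α :: l).dropLast, y ≠ η) ∧ l.getLastD α = η

def Hfun (p : E → E → ℝ) (B : Set E) (η α : E) : ℝ≥0∞ :=
  ∑' l : {l : List E // Hc B η α l}, wt p α l.1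

/-- Condition: loop at `η` avoiding `B`. -/
def Lc (B : Set E) (η : E) (l : List E) : Prop :=
  (∀ y ∈ η :: l, y ∉ B) ∧ l.getLastD η = η

def Lfun (p : E → E → ℝ) (B : Set E) (η : E) : ℝ≥0∞ :=
  ∑' l : {l : List E // Lc B η l}, wt p η l.1

/-- Condition: escape path from `η`: interior avoids `{η} ∪ B`, ends in `B`. -/
def Ec (B : Set E) (η : E) (e : List E) : Prop :=
  (∀ y ∈ e.dropLast, y ∉ ({η} ∪ B : Set E)) ∧ e.getLastD η ∈ B

def Efun (p : E → E → ℝ) (B : Set E) (η : E) : ℝ≥0∞ :=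
  ∑' e : {e : List E // Ec B η e}, wt p η e.1

/-- first hit decomposition: `G(ξ,η) ≤ H(ξ,η) L(η,η)`. -/
lemma Gfun_le_Hfun_mul_Lfun (hp : ∀ a b, 0 ≤ p a b) (B : Set E) (η ξ : E) :
    Gfun p B ξ η ≤ Hfun p B η ξ * Lfun p B η := by
  classical
  set split : List E → List E × List E := fun m =>
    if ξ = η then ([], m)
    else ((m.takeWhile (fun y => decide (y ≠ η))) ++ [η],
      (m.dropWhile (fun y => decide (y ≠ η))).tail) with hsplit
  have spec : ∀ m : List E, Gc B ξ η m →
      Hc B η ξ (split m).1 ∧ Lc B η (split m).2 ∧ m = (split m).1 ++ (split m).2 ∧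
        (split m).1.getLastD ξ = η := by
    intro m hm
    by_cases hξ : ξ = η
    · subst hξ
      rw [hsplit]
      simp only [if_pos rfl]
      refine ⟨⟨?_, ?_, rfl⟩, ⟨hm.1, hm.2⟩, by simp, rfl⟩
      · intro y hy
        simp at hy
        subst hy
        exact hm.1 y (List.mem_cons_self)
      · simp
    · have hmne : m ≠ [] := by
        intro h
        subst h
        exact hξ hm.2
      have hmem : η ∈ m := by
        have := getLastD_mem m ξ hmne
        rwa [hm.2] at this
      set u := m.takeWhile (fun y => decide (y ≠ η)) with hu
      set w := m.dropWhile (fun y => decide (y ≠ η)) with hw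
      have huw : u ++ w = m := List.takeWhile_append_dropWhile
      have hwne : w ≠ [] := by
        intro h
        rw [h, List.append_nil] at huw
        rw [← huw] at hmem
        have := List.mem_takeWhile_imp hmem
        simp at this
      have hhead : w.head hwne = η := by
        have h0 := List.head_dropWhile_not (fun y => decide (y ≠ η)) hwne
        simp only [decide_eq_false_iff_not, ne_eq, not_not] at h0
        exact h0
      have hwcons : w = η :: w.tail := by
        conv_lhs => rw [← List.cons_head_tail hwne, hhead]
      have hm_eq : m = u ++ η :: w.tail := by rw [← huw, ← hwcons]
      have husub : ∀ y ∈ u, y ∈ m := by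
        intro y hy
        rw [← huw]
        exact List.mem_append_left _ hy
      have hune : ∀ y ∈ u, y ≠ η := by
        intro y hy
        have := List.mem_takeWhile_imp hy
        simpa using this
      have hvsub : ∀ y ∈ w.tail, y ∈ m := by
        intro y hy
        rw [← huw]
        exact List.mem_append_right _ (List.mem_of_mem_tail hy)
      rw [hsplit]
      simp only [if_neg hξ]
      refine ⟨⟨?_, ?_, ?_⟩, ⟨?_, ?_⟩, ?_, ?_⟩
      · -- avoid B for ξ :: (u ++ [η])
        intro y hy
        rcases List.mem_cons.1 hy with rfl | hy
        · exact hm.1 y (List.mem_cons_self)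
        · rcases List.mem_append.1 hy with hy | hy
          · exact hm.1 y (List.mem_cons_of_mem _ (husub y hy))
          · simp at hy
            subst hy
            exact hm.1 y (List.mem_cons_of_mem _ hmem)
      · -- dropLast of ξ :: u ++ [η] has no η
        intro y hy
        have : (ξ :: (u ++ [η])).dropLast = ξ :: u := by
          rw [show ξ :: (u ++ [η]) = (ξ :: u) ++ [η] from rfl, List.dropLast_concat]
        rw [this] at hy
        rcases List.mem_cons.1 hy with rfl | hy
        · exact hξ
        · exact hune y hy
      · exact List.getLastD_concat
      · -- loop avoids B
        intro y hy
        rcases List.mem_cons.1 hy with rfl | hy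
        · exact hm.1 y (List.mem_cons_of_mem _ hmem)
        · exact hm.1 y (List.mem_cons_of_mem _ (hvsub y hy))
      · -- loop ends at η
        rcases h : w.tail with _ | ⟨c, t⟩
        · rfl
        · rw [← h]
          have h2 : w.tail ≠ [] := by rw [h]; exact List.cons_ne_nil c t
          have := hm.2
          rw [hm_eq, getLastD_append' u ξ ξ (List.cons_ne_nil η w.tail),
            List.getLastD_cons] at this
          exact this
      · rw [List.append_assoc]
        exact hm_eq
      · exact List.getLastD_concat
  set i : {l : List E // Gc B ξ η l} →
      {l : List E // Hc B η ξ l} × {l : List E // Lc B η l} :=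
    fun x => (⟨(split x.1).1, (spec x.1 x.2).1⟩, ⟨(split x.1).2, (spec x.1 x.2).2.1⟩) with hi
  have hinj : Function.Injective i := by
    rintro ⟨m₁, h₁⟩ ⟨m₂, h₂⟩ h
    have e1 : (split m₁).1 = (split m₂).1 := congrArg (fun z => z.1.1) h
    have e2 : (split m₁).2 = (split m₂).2 := congrArg (fun z => z.2.1) h
    apply Subtype.ext
    show m₁ = m₂
    calc m₁ = (split m₁).1 ++ (split m₁).2 := (spec m₁ h₁).2.2.1
      _ = (split m₂).1 ++ (split m₂).2 := by rw [e1, e2]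
      _ = m₂ := ((spec m₂ h₂).2.2.1).symm
  have hle : ∀ x : {l : List E // Gc B ξ η l},
      wt p ξ x.1 = wt p ξ (i x).1.1 * wt p η (i x).2.1 := by
    rintro ⟨m, hm⟩
    have h1 := (spec m hm).2.2.1
    have h2 := (spec m hm).2.2.2
    have h3 : wt p ξ m = wt p ξ ((split m).1 ++ (split m).2) := by rw [← h1]
    rw [h3, wt_append hp, h2]
  calc Gfun p B ξ η
      ≤ ∑' y : {l : List E // Hc B η ξ l} × {l : List E // Lc B η l},
          wt p ξ y.1.1 * wt p η y.2.1 := by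
        refine Summable.tsum_le_tsum_of_inj i hinj (fun c _ => zero_le)
          (fun x => le_of_eq (hle x)) ENNReal.summable ENNReal.summable
    _ = Hfun p B η ξ * Lfun p B η := by
        rw [ENNReal.tsum_prod (f := fun (a : {l : List E // Hc B η ξ l})
          (b : {l : List E // Lc B η l}) => wt p ξ a.1 * wt p η b.1)]
        simp_rw [ENNReal.tsum_mul_left]
        rw [ENNReal.tsum_mul_right]
        rfl

lemma Hfun_le_one (hp : ∀ a b, 0 ≤ p a b)
    (hrow : ∀ a, (∑' b : E, ENNReal.ofReal (p a b)) ≤ 1) (B : Set E) (η ξ : E) :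
    Hfun p B η ξ ≤ 1 := by
  have hAC : Antichain {l : List E | Hc B η ξ l} := by
    intro u hu v hv hpre
    obtain ⟨s, rfl⟩ := hpre
    by_cases hs : s = []
    · rw [hs, List.append_nil]
    · exfalso
      by_cases hu0 : u = []
      · subst hu0
        have hξη : ξ = η := hu.2.2
        have h2 := hv.2.1 ξ
        rw [List.nil_append] at h2
        apply h2 _ hξη
        rw [List.dropLast_cons_of_ne_nil hs]
        exact List.mem_cons_self
      · have hηu : η ∈ u := by
          have := getLastD_mem u ξ hu0
          rwa [hu.2.2] at this
        apply hv.2.1 η _ rfl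
        rw [show ξ :: (u ++ s) = (ξ :: u) ++ s from rfl,
          List.dropLast_append_of_ne_nil hs]
        exact List.mem_append_left _ (List.mem_cons_of_mem _ hηu)
  calc Hfun p B η ξ
      = ∑' l : List E, ({l : List E | Hc B η ξ l}).indicator (wt p ξ) l :=
        tsum_subtype _ _
    _ ≤ 1 := mass_antichain hp hrow ξ _ hAC

lemma Ec_ne_nil {B : Set E} {η : E} (hη : η ∉ B) {e : List E} (he : Ec B η e) : e ≠ [] := by
  intro h
  subst h
  exact hη he.2

lemma Lc_Ec_aux {B : Set E} {η : E} (hη : η ∉ B) {l₁ e₁ l₂ e₂ : List E}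
    (h₁ : Lc B η l₁) (he₁ : Ec B η e₁) (h₂ : Lc B η l₂) (he₂ : Ec B η e₂)
    (heq : l₁ ++ e₁ = l₂ ++ e₂) (hlen : l₁.length ≤ l₂.length) : l₁ = l₂ := by
  have hpre : l₁ <+: l₂ := by
    apply List.prefix_of_prefix_length_le _ (List.prefix_append l₂ e₂) hlen
    rw [← heq]
    exact List.prefix_append l₁ e₁
  obtain ⟨s, rfl⟩ := hpre
  by_cases hs : s = []
  · rw [hs, List.append_nil]
  · exfalso
    have he : e₁ = s ++ e₂ := by
      apply List.append_cancel_left (as := l₁)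
      rw [← List.append_assoc]
      exact heq
    have hηs : η ∈ s := by
      have h3 : (l₁ ++ s).getLastD η = η := h₂.2
      rw [getLastD_append' l₁ η η hs] at h3
      have := getLastD_mem s η hs
      rwa [h3] at this
    have : η ∈ e₁.dropLast := by
      rw [he, List.dropLast_append_of_ne_nil (Ec_ne_nil hη he₂)]
      exact List.mem_append_left _ hηs
    exact he₁.1 η this (Set.mem_union_left _ rfl)

lemma Lfun_mul_Efun_le_one (hp : ∀ a b, 0 ≤ p a b)
    (hrow : ∀ a, (∑' b : E, ENNReal.ofReal (p a b)) ≤ 1) (B : Set E) {η : E} (hη : η ∉ B) :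
    Lfun p B η * Efun p B η ≤ 1 := by
  classical
  set U : Set (List E) := {m | ∃ l e, Lc B η l ∧ Ec B η e ∧ m = l ++ e} with hU
  have hAC : Antichain U := by
    rintro m₁ ⟨l₁, e₁, hl₁, he₁, rfl⟩ m₂ ⟨l₂, e₂, hl₂, he₂, rfl⟩ hpre
    obtain ⟨s, hs⟩ := hpre
    by_cases hsnil : s = []
    · rw [← hs, hsnil, List.append_nil]
    · exfalso
      have hm₁ne : l₁ ++ e₁ ≠ [] := by
        simp [Ec_ne_nil hη he₁]
      set y := (l₁ ++ e₁).getLastD η with hy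
      have hyB : y ∈ B := by
        rw [hy, getLastD_append' l₁ η η (Ec_ne_nil hη he₁)]
        exact he₁.2
      have hymem : y ∈ (l₂ ++ e₂).dropLast := by
        rw [← hs, List.dropLast_append_of_ne_nil hsnil]
        exact List.mem_append_left _ (getLastD_mem _ _ hm₁ne)
      rw [List.dropLast_append_of_ne_nil (Ec_ne_nil hη he₂)] at hymem
      rcases List.mem_append.1 hymem with h | h
      · exact hl₂.1 y (List.mem_cons_of_mem _ h) hyB
      · exact he₂.1 y h (Set.mem_union_right _ hyB)
  set i : {l : List E // Lc B η l} × {e : List E // Ec B η e} → {m : List E // m ∈ U} :=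
    fun x => ⟨x.1.1 ++ x.2.1, ⟨x.1.1, x.2.1, x.1.2, x.2.2, rfl⟩⟩ with hi
  have hinj : Function.Injective i := by
    rintro ⟨⟨l₁, hl₁⟩, ⟨e₁, he₁⟩⟩ ⟨⟨l₂, hl₂⟩, ⟨e₂, he₂⟩⟩ h
    have heq : l₁ ++ e₁ = l₂ ++ e₂ := congrArg Subtype.val h
    have hll : l₁ = l₂ := by
      rcases le_total l₁.length l₂.length with hlen | hlen
      · exact Lc_Ec_aux hη hl₁ he₁ hl₂ he₂ heq hlen
      · exact (Lc_Ec_aux hη hl₂ he₂ hl₁ he₁ heq.symm hlen).symm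
    subst hll
    have hee : e₁ = e₂ := List.append_cancel_left heq
    subst hee
    rfl
  have key : ∀ x : {l : List E // Lc B η l} × {e : List E // Ec B η e},
      wt p η x.1.1 * wt p η x.2.1 = wt p η (x.1.1 ++ x.2.1) := by
    rintro ⟨⟨l, hl⟩, ⟨e, he⟩⟩
    rw [wt_append hp, hl.2]
  calc Lfun p B η * Efun p B η
      = ∑' x : {l : List E // Lc B η l} × {e : List E // Ec B η e},
          wt p η x.1.1 * wt p η x.2.1 := by
        rw [ENNReal.tsum_prod (f := fun (a : {l : List E // Lc B η l})
          (b : {e : List E // Ec B η e}) => wt p η a.1 * wt p η b.1)]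
        simp_rw [ENNReal.tsum_mul_left]
        rw [ENNReal.tsum_mul_right]
        rfl
    _ ≤ ∑' m : {m : List E // m ∈ U}, wt p η m.1 := by
        refine Summable.tsum_le_tsum_of_inj i hinj (fun c _ => zero_le)
          (fun x => le_of_eq ?_) ENNReal.summable ENNReal.summable
        exact key x
    _ = ∑' m : List E, U.indicator (wt p η) m := tsum_subtype _ _
    _ ≤ 1 := mass_antichain hp hrow η _ hAC

lemma rev_dropLast_rev (a : E) (l : List E) :
    ((a :: l).reverse).dropLast.reverse = l := by
  rw [List.reverse_cons, List.dropLast_concat, List.reverse_reverse]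

lemma Gc_rev {B : Set E} {a b : E} {l : List E} (h : Gc B a b l) :
    Gc B b a ((a :: l).dropLast.reverse) := by
  have hpts : b :: ((a :: l).dropLast.reverse) = (a :: l).reverse := by
    have h2 := points_revP (a, l)
    simp only [revP] at h2
    rw [← h2, h.2]
  constructor
  · intro y hy
    rw [hpts, List.mem_reverse] at hy
    exact h.1 y hy
  · have e1 := getLast?_cons' b ((a :: l).dropLast.reverse)
    rw [hpts, List.getLast?_reverse] at e1
    simp only [List.head?_cons] at e1
    exact (Option.some_injective _ e1.symm)

lemma Gfun_rev (hp : ∀ a b, 0 ≤ p a b) (hq : ∀ a b, 0 ≤ q a b) {M : E → ℝ}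
    (hM : ∀ a, 0 < M a) (hrel : ∀ a b, M a * p a b = M b * q b a) (B : Set E) (α β : E) :
    ENNReal.ofReal (M α) * Gfun p B α β = ENNReal.ofReal (M β) * Gfun q B β α := by
  classical
  have pts : ∀ {a b : E} {l : List E}, Gc B a b l →
      b :: ((a :: l).dropLast.reverse) = (a :: l).reverse := by
    intro a b l h
    have h2 := points_revP (a, l)
    simp only [revP] at h2
    rw [← h2, h.2]
  set Ψ : {l : List E // Gc B α β l} ≃ {l : List E // Gc B β α l} :=
    { toFun := fun x => ⟨(α :: x.1).dropLast.reverse, Gc_rev x.2⟩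
      invFun := fun x => ⟨(β :: x.1).dropLast.reverse, Gc_rev x.2⟩
      left_inv := by
        rintro ⟨l, h⟩
        apply Subtype.ext
        show (β :: (α :: l).dropLast.reverse).dropLast.reverse = l
        rw [pts h, rev_dropLast_rev]
      right_inv := by
        rintro ⟨l, h⟩
        apply Subtype.ext
        show (α :: (β :: l).dropLast.reverse).dropLast.reverse = l
        rw [pts h, rev_dropLast_rev] } with hΨ
  have hterm : ∀ x : {l : List E // Gc B α β l},
      ENNReal.ofReal (M α) * wt p α x.1
        = ENNReal.ofReal (M β) * wt q β ((α :: x.1).dropLast.reverse) := by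
    rintro ⟨l, h⟩
    have hr := wre_rev hrel l α
    rw [h.2] at hr
    calc ENNReal.ofReal (M α) * wt p α l
        = ENNReal.ofReal (M α * wre p α l) := (ENNReal.ofReal_mul (hM α).le).symm
      _ = ENNReal.ofReal (M β * wre q β ((α :: l).dropLast.reverse)) := by rw [hr]
      _ = ENNReal.ofReal (M β) * wt q β ((α :: l).dropLast.reverse) :=
          ENNReal.ofReal_mul (hM β).le
  calc ENNReal.ofReal (M α) * Gfun p B α β
      = ∑' x : {l : List E // Gc B α β l}, ENNReal.ofReal (M α) * wt p α x.1 :=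
        ENNReal.tsum_mul_left.symm
    _ = ∑' x : {l : List E // Gc B α β l},
          ENNReal.ofReal (M β) * wt q β ((Ψ x).1 : List E) := tsum_congr hterm
    _ = ∑' y : {l : List E // Gc B β α l}, ENNReal.ofReal (M β) * wt q β y.1 :=
        Ψ.tsum_eq (fun y => ENNReal.ofReal (M β) * wt q β y.1)
    _ = ENNReal.ofReal (M β) * Gfun q B β α := ENNReal.tsum_mul_left

lemma pathWeight_nonneg (hp : ∀ a b, 0 ≤ p a b) {n : ℕ} (γ : Fin (n + 1) → E) :
    0 ≤ pathWeight p γ :=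
  Finset.prod_nonneg fun i _ => hp _ _

lemma interior_tup (Q : E → Prop) (a b : E) (l : List E) :
    (∀ j : Fin (l.length + 2), 0 < (j : ℕ) → (j : ℕ) < l.length + 1 → Q (tup a (b :: l) j)) ↔
      ∀ y ∈ (b :: l).dropLast, Q y := by
  constructor
  · intro h y hy
    obtain ⟨i, hi, rfl⟩ := List.mem_iff_getElem.1 hy
    have hi' : i < l.length := by
      have := hi
      rw [List.length_dropLast, List.length_cons] at this
      omega
    have h2 := h ⟨i + 1, by omega⟩ (by simp) (by
      show i + 1 < l.length + 1
      omega)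
    rw [tup_val] at h2
    rw [List.getElem_dropLast]
    simpa using h2
  · intro h j hj0 hj1
    rw [tup_val]
    rcases j with ⟨jv, hj⟩
    match jv, hj with
    | 0, hj => exact absurd hj0 (by simp)
    | (i+1), hj =>
      have hi' : i < l.length := by
        have := hj1
        simp only at this
        omega
      have hmem : (b :: l).dropLast[i]'(by
          rw [List.length_dropLast, List.length_cons]; omega) ∈ (b :: l).dropLast :=
        List.getElem_mem _
      have hQ := h _ hmem
      rw [List.getElem_dropLast] at hQ
      exact hQ

lemma Efun_le_one (hp : ∀ a b, 0 ≤ p a b)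
    (hrow : ∀ a, (∑' b : E, ENNReal.ofReal (p a b)) ≤ 1) (B : Set E) {η : E} (hη : η ∉ B) :
    Efun p B η ≤ 1 := by
  have hAC : Antichain {e : List E | Ec B η e} := by
    intro u hu v hv hpre
    obtain ⟨s, rfl⟩ := hpre
    by_cases hs : s = []
    · rw [hs, List.append_nil]
    · exfalso
      have hune : u ≠ [] := Ec_ne_nil hη hu
      have hyB : u.getLastD η ∈ B := hu.2
      have hymem : u.getLastD η ∈ (u ++ s).dropLast := by
        rw [List.dropLast_append_of_ne_nil hs]
        exact List.mem_append_left _ (getLastD_mem _ _ hune)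
      exact hv.1 _ hymem (Set.mem_union_right _ hyB)
  calc Efun p B η = ∑' e : List E, ({e : List E | Ec B η e}).indicator (wt p η) e :=
        tsum_subtype _ _
    _ ≤ 1 := mass_antichain hp hrow η _ hAC

def retTerm (p : E → E → ℝ) (B : Set E) (η : E) (x : Σ n : ℕ, Fin (n + 2) → E) : ℝ :=
  if x.2 0 = η ∧ (∀ j : Fin (x.1 + 2), 0 < (j : ℕ) → (j : ℕ) < x.1 + 1 →
      x.2 j ∉ ({η} ∪ B : Set E)) ∧ x.2 (Fin.last (x.1 + 1)) ∈ B
    then pathWeight p x.2 else 0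

lemma retProb_bridge (p : E → E → ℝ) (B : Set E) (η : E) :
    retProb p η ({η} ∪ B) B = ∑' x, retTerm p B η x := by
  rw [retProb]
  apply tsum_congr
  intro x
  rw [retTerm]
  congr

/-- the `retProb` real-valued summand, transported to triples. -/
lemma retProb_term (p : E → E → ℝ) (B : Set E) (η : E) (x : E × E × List E) :
    retTerm p B η (pathEquiv2 x)
    = if x.1 = η ∧ Ec B η (x.2.1 :: x.2.2) then wre p x.1 (x.2.1 :: x.2.2) else 0 := by
  rcases x with ⟨a, b, l⟩
  rw [retTerm]
  have hc1 : (pathEquiv2 (a, b, l)).2 0 = a := rfl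
  have hc2 : (∀ j : Fin (l.length + 2), 0 < (j : ℕ) → (j : ℕ) < l.length + 1 →
      (pathEquiv2 (a, b, l)).2 j ∉ ({η} ∪ B : Set E)) ↔
      ∀ y ∈ (b :: l).dropLast, y ∉ ({η} ∪ B : Set E) :=
    interior_tup (fun y => y ∉ ({η} ∪ B : Set E)) a b l
  have hc3 : (pathEquiv2 (a, b, l)).2 (Fin.last (l.length + 1)) = (b :: l).getLastD η := by
    show tup a (b :: l) (Fin.last ((b :: l).length)) = _
    rw [tup_last, List.getLastD_cons, List.getLastD_cons]
  have hpw : pathWeight p (pathEquiv2 (a, b, l)).2 = wre p a (b :: l) :=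
    pathWeight_tup p a (b :: l)
  have hiff : ((pathEquiv2 (a, b, l)).2 0 = η ∧
      (∀ j : Fin ((pathEquiv2 (a, b, l)).1 + 2), 0 < (j : ℕ) →
        (j : ℕ) < (pathEquiv2 (a, b, l)).1 + 1 →
        (pathEquiv2 (a, b, l)).2 j ∉ ({η} ∪ B : Set E)) ∧
      (pathEquiv2 (a, b, l)).2 (Fin.last ((pathEquiv2 (a, b, l)).1 + 1)) ∈ B)
      ↔ (a = η ∧ Ec B η (b :: l)) := by
    constructor
    · rintro ⟨h1, h2, h3⟩
      refine ⟨hc1 ▸ h1, hc2.1 h2, ?_⟩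
      show (b :: l).getLastD η ∈ B
      rw [← hc3]
      exact h3
    · rintro ⟨h1, h2, h3⟩
      refine ⟨?_, hc2.2 h2, ?_⟩
      · show a = η
        exact h1
      · show (pathEquiv2 (a, b, l)).2 (Fin.last (l.length + 1)) ∈ B
        rw [hc3]
        exact h3
  exact if_congr hiff hpw rfl

lemma retProbE_eq_Efun (hp : ∀ a b, 0 ≤ p a b) (B : Set E) {η : E} (hη : η ∉ B) :
    (∑' x : Σ n : ℕ, Fin (n + 2) → E, ENNReal.ofReal (retTerm p B η x)) = Efun p B η := by
  classical
  rw [← pathEquiv2.tsum_eq (α := ℝ≥0∞)]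
  have step1 : ∀ x : E × E × List E,
      ENNReal.ofReal (retTerm p B η (pathEquiv2 x))
      = if x.1 = η then
          (if Ec B η (x.2.1 :: x.2.2) then wt p η (x.2.1 :: x.2.2) else 0) else 0 := by
    intro x
    rw [retProb_term p B η x]
    by_cases h1 : x.1 = η
    · by_cases h2 : Ec B η (x.2.1 :: x.2.2)
      · simp [h1, h2, wt]
      · simp [h1, h2]
    · simp [h1]
  rw [tsum_congr step1]
  rw [ENNReal.tsum_prod (f := fun (a : E) (y : E × List E) =>
    if a = η then (if Ec B η (y.1 :: y.2) then wt p η (y.1 :: y.2) else 0) else 0)]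
  rw [tsum_eq_single η (by intro a ha; simp [ha])]
  rw [tsum_congr (fun y : E × List E => if_pos (rfl : η = η)
    (h := Classical.propDecidable _)
    (t := if Ec B η (y.1 :: y.2) then wt p η (y.1 :: y.2) else 0) (e := 0))]
  have hcons : Function.Injective (fun y : E × List E => y.1 :: y.2) := by
    rintro ⟨b, t⟩ ⟨b', t'⟩ h
    simpa [Prod.ext_iff] using h
  have hsupp : Function.support
      (fun e : List E => if Ec B η e then wt p η e else 0) ⊆
        Set.range (fun y : E × List E => y.1 :: y.2) := by
    intro e he
    match e with
    | [] =>
      exfalso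
      apply he
      have : ¬ Ec B η [] := by
        intro hc
        exact hη hc.2
      simp [this]
    | b :: t => exact ⟨(b, t), rfl⟩
  refine (Function.Injective.tsum_eq hcons hsupp
    (f := fun e : List E => if Ec B η e then wt p η e else 0)).trans ?_
  rw [show Efun p B η = ∑' e : List E, Set.indicator {e : List E | Ec B η e} (wt p η) e
    from tsum_subtype _ _]
  apply tsum_congr
  intro e
  by_cases h : Ec B η e
  · simp [h, Set.indicator_of_mem, Set.mem_setOf_eq]
  · simp [h]

lemma pw_congr {x y : Σ n : ℕ, Fin (n + 1) → E} (h : x = y) :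
    pathWeight p x.2 = pathWeight p y.2 := by subst h; rfl

lemma last_congr {x y : Σ n : ℕ, Fin (n + 1) → E} (h : x = y) :
    x.2 (Fin.last x.1) = y.2 (Fin.last y.1) := by subst h; rfl

lemma zero_congr {x y : Σ n : ℕ, Fin (n + 1) → E} (h : x = y) : x.2 0 = y.2 0 := by
  subst h; rfl

lemma retProb_nonneg_term (hp : ∀ a b, 0 ≤ p a b) (B : Set E) (η : E)
    (x : Σ n : ℕ, Fin (n + 2) → E) :
    0 ≤ retTerm p B η x := by
  rw [retTerm]
  split
  · exact pathWeight_nonneg hp _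
  · exact le_refl 0

lemma retProb_summable (hp : ∀ a b, 0 ≤ p a b)
    (hrow : ∀ a, (∑' b : E, ENNReal.ofReal (p a b)) ≤ 1) (B : Set E) {η : E} (hη : η ∉ B) :
    Summable (retTerm p B η) := by
  set F := retTerm p B η with hF
  have hFnn : ∀ x, 0 ≤ F x := retProb_nonneg_term hp B η
  have hfin : (∑' x, ENNReal.ofReal (F x)) ≠ ⊤ := by
    rw [hF]
    rw [retProbE_eq_Efun hp B hη]
    exact ne_top_of_le_ne_top ENNReal.one_ne_top (Efun_le_one hp hrow B hη)
  have h2 := ENNReal.summable_toReal hfin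
  have h3 : (fun x => (ENNReal.ofReal (F x)).toReal) = F :=
    funext fun x => ENNReal.toReal_ofReal (hFnn x)
  rwa [h3] at h2

lemma ofReal_retProb (hp : ∀ a b, 0 ≤ p a b)
    (hrow : ∀ a, (∑' b : E, ENNReal.ofReal (p a b)) ≤ 1) (B : Set E) {η : E} (hη : η ∉ B) :
    ENNReal.ofReal (retProb p η ({η} ∪ B) B) = Efun p B η := by
  rw [retProb_bridge]
  exact (ENNReal.ofReal_tsum_of_nonneg (retProb_nonneg_term hp B η)
    (retProb_summable hp hrow B hη)).trans (retProbE_eq_Efun hp B hη)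

lemma exists_esc (hp : ∀ a b, 0 ≤ p a b) {B : Set E} {η : E} (hη : η ∉ B) :
    ∀ (N : ℕ) (l : List E), l.length ≤ N → 0 < wre p η l → l.getLastD η ∈ B →
      ∃ e, Ec B η e ∧ 0 < wre p η e := by
  classical
  intro N
  induction N with
  | zero =>
    intro l hlen hpos hlast
    have : l = [] := List.length_eq_zero_iff.1 (Nat.le_zero.1 hlen)
    subst this
    exact absurd hlast hη
  | succ N ih =>
    intro l hlen hpos hlast
    have hlne : l ≠ [] := by
      intro h
      subst h
      exact hη hlast
    set u := l.takeWhile (fun y => decide (y ∉ ({η} ∪ B : Set E))) with hu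
    set w := l.dropWhile (fun y => decide (y ∉ ({η} ∪ B : Set E))) with hw
    have huw : u ++ w = l := List.takeWhile_append_dropWhile
    have hwne : w ≠ [] := by
      intro h
      rw [h, List.append_nil] at huw
      have hy : l.getLastD η ∈ u := by
        rw [huw]
        exact getLastD_mem l η hlne
      have := List.mem_takeWhile_imp hy
      simp only [decide_eq_true_iff] at this
      exact this (Set.mem_union_right _ hlast)
    have hc : w.head hwne ∈ ({η} ∪ B : Set E) := by
      have h0 := List.head_dropWhile_not (fun y => decide (y ∉ ({η} ∪ B : Set E))) hwne
      simp only [decide_eq_false_iff_not, not_not] at h0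
      exact h0
    set c := w.head hwne with hcdef
    have hwcons : w = c :: w.tail := (List.cons_head_tail hwne).symm
    have hl_eq : l = (u ++ [c]) ++ w.tail := by
      rw [List.append_assoc, List.singleton_append, ← hwcons, huw]
    have hupure : ∀ y ∈ u, y ∉ ({η} ∪ B : Set E) := by
      intro y hy
      have := List.mem_takeWhile_imp hy
      simpa using this
    have hgl : (u ++ [c]).getLastD η = c := List.getLastD_concat
    have hsplit : wre p η l = wre p η (u ++ [c]) * wre p c w.tail := by
      rw [hl_eq, wre_append, hgl]
    have h1 : 0 < wre p η (u ++ [c]) := by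
      rcases lt_or_eq_of_le (wre_nonneg hp η (u ++ [c])) with h | h
      · exact h
      · exfalso
        rw [hsplit, ← h, zero_mul] at hpos
        exact lt_irrefl 0 hpos
    have h2 : 0 < wre p c w.tail := by
      rcases lt_or_eq_of_le (wre_nonneg hp c w.tail) with h | h
      · exact h
      · exfalso
        rw [hsplit, ← h, mul_zero] at hpos
        exact lt_irrefl 0 hpos
    rcases hc with hcη | hcB
    · -- c = η : recurse on w.tail
      have hcη' : c = η := hcη
      have hvne : w.tail ≠ [] := by
        intro h
        rw [h, List.append_nil] at hl_eq
        rw [hl_eq, hgl, hcη'] at hlast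
        exact hη hlast
      have hvlast : w.tail.getLastD η ∈ B := by
        have := hlast
        rw [hl_eq, getLastD_append' _ η η hvne] at this
        exact this
      have hvlen : w.tail.length ≤ N := by
        have hlw : u.length + w.length = l.length := by rw [← huw, List.length_append]
        have hwt : w.length = w.tail.length + 1 := by rw [hwcons]; simp
        omega
      rw [hcη'] at h2
      exact ih w.tail hvlen h2 hvlast
    · -- c ∈ B : done
      refine ⟨u ++ [c], ⟨?_, ?_⟩, h1⟩
      · rw [List.dropLast_concat]
        exact hupure
      · rw [hgl]
        exact hcB

lemma cap_singleton (p : E → E → ℝ) (M : E → ℝ) (B : Set E) (η : E) :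
    cap p M {η} B = M η * retProb p η ({η} ∪ B) B := by
  rw [cap]
  exact tsum_singleton η (fun x => M x * retProb p x ({η} ∪ B) B)

lemma retProb_pos (hp : ∀ a b, 0 ≤ p a b)
    (hrow : ∀ a, (∑' b : E, ENNReal.ofReal (p a b)) ≤ 1)
    (hirr : MCIrreducible p) {B : Set E} (hB : B.Nonempty) {η : E} (hη : η ∉ B) :
    0 < retProb p η ({η} ∪ B) B := by
  classical
  obtain ⟨b₀, hb₀⟩ := hB
  obtain ⟨n, γ, h0, hlastγ, hwpos⟩ := hirr η b₀
  set x : Σ n : ℕ, Fin (n + 1) → E := ⟨n, γ⟩ with hx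
  set al := pathEquiv.symm x with hal
  have hxe : pathEquiv al = x := Equiv.apply_symm_apply _ _
  have hwre : wre p al.1 al.2 = pathWeight p γ := by
    rw [← pathWeight_tup p al.1 al.2]
    exact pw_congr hxe
  have ha : al.1 = η := by
    have := zero_congr hxe
    rw [show (pathEquiv al).2 0 = tup al.1 al.2 0 from rfl] at this
    rw [show tup al.1 al.2 0 = al.1 from rfl] at this
    rw [this]
    exact h0
  have hend : al.2.getLastD al.1 = b₀ := by
    have := last_congr hxe
    rw [show (pathEquiv al).2 (Fin.last (pathEquiv al).1) =
      tup al.1 al.2 (Fin.last al.2.length) from rfl, tup_last] at this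
    rw [this]
    exact hlastγ
  obtain ⟨e, hEc, hepos⟩ := by
    refine exists_esc hp hη al.2.length al.2 le_rfl ?_ ?_
    · rw [ha] at hwre
      rw [hwre]
      exact hwpos
    · rw [ha] at hend
      rw [hend]
      exact hb₀
  have hene : e ≠ [] := Ec_ne_nil hη hEc
  set y : Σ n : ℕ, Fin (n + 2) → E := pathEquiv2 (η, e.head hene, e.tail) with hy
  have hterm := retProb_term p B η (η, e.head hene, e.tail)
  have hcons : e.head hene :: e.tail = e := List.cons_head_tail hene
  rw [hcons] at hterm
  have hterm2 : retTerm p B η y = wre p η e := by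
    rw [hy, hterm, if_pos ⟨rfl, hEc⟩]
  have hsum := retProb_summable hp hrow B hη
  have hle := Summable.le_tsum hsum y (fun j _ => retProb_nonneg_term hp B η j)
  rw [retProb_bridge]
  calc (0 : ℝ) < wre p η e := hepos
    _ = _ := hterm2.symm
    _ ≤ _ := hle

variable {lam : E → ℝ} {D : Set E} {η : E}

def occTerm (p : E → E → ℝ) (lam : E → ℝ) (D B : Set E) (η : E)
    (x : Σ n : ℕ, Fin (n + 1) → E) : ℝ :=
  (if x.2 0 = η ∧ (∀ j, x.2 j ∉ B) ∧ x.2 (Fin.last x.1) ∈ D then pathWeight p x.2 else 0)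
    / lam (x.2 (Fin.last x.1))

lemma occ_bridge (p : E → E → ℝ) (lam : E → ℝ) (D B : Set E) (η : E) :
    occupationTime p lam D B η = ∑' x, ENNReal.ofReal (occTerm p lam D B η x) := by
  rw [occupationTime]
  apply tsum_congr
  intro x
  apply congrArg ENNReal.ofReal
  rw [occTerm]

lemma occ_term_tup (p : E → E → ℝ) (lam : E → ℝ) (D B : Set E) (η : E) (a : E) (l : List E) :
    occTerm p lam D B η (pathEquiv (a, l))
      = (if a = η ∧ (∀ y ∈ a :: l, y ∉ B) ∧ l.getLastD a ∈ D then wre p a l else 0)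
        / lam (l.getLastD a) := by
  rw [occTerm]
  show (if tup a l 0 = η ∧ (∀ j, tup a l j ∉ B) ∧ tup a l (Fin.last l.length) ∈ D
      then pathWeight p (tup a l) else 0) / lam (tup a l (Fin.last l.length)) = _
  rw [tup_last, pathWeight_tup]
  congr 1
  apply if_congr _ rfl rfl
  constructor
  · rintro ⟨h1, h2, h3⟩
    exact ⟨h1, (forall_tup (fun y => y ∉ B) a l).1 h2, h3⟩
  · rintro ⟨h1, h2, h3⟩
    exact ⟨h1, (forall_tup (fun y => y ∉ B) a l).2 h2, h3⟩

lemma occ_eq (hp : ∀ a b, 0 ≤ p a b) (hlam : ∀ a, 0 < lam a) (B : Set E) :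
    occupationTime p lam D B η
      = ∑' ξ : E, (if ξ ∈ D then (ENNReal.ofReal (lam ξ))⁻¹ * Gfun p B η ξ else 0) := by
  classical
  rw [occ_bridge, ← pathEquiv.tsum_eq
    (f := fun x => ENNReal.ofReal (occTerm p lam D B η x))]
  rw [tsum_congr (fun al : E × List E => congrArg ENNReal.ofReal
    (occ_term_tup p lam D B η al.1 al.2))]
  rw [ENNReal.tsum_prod (f := fun (a : E) (l : List E) => ENNReal.ofReal
    ((if a = η ∧ (∀ y ∈ a :: l, y ∉ B) ∧ l.getLastD a ∈ D then wre p a l else 0)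
      / lam (l.getLastD a)))]
  rw [tsum_eq_single η (by
    intro a ha
    have : ∀ l : List E, ENNReal.ofReal
        ((if a = η ∧ (∀ y ∈ a :: l, y ∉ B) ∧ l.getLastD a ∈ D then wre p a l else 0)
          / lam (l.getLastD a)) = 0 := by
      intro l
      rw [if_neg (by tauto), zero_div, ENNReal.ofReal_zero]
    rw [tsum_congr this, tsum_zero])]
  set F : List E → ℝ≥0∞ := fun l => ENNReal.ofReal
    ((if (∀ y ∈ η :: l, y ∉ B) ∧ l.getLastD η ∈ D then wre p η l else 0)
      / lam (l.getLastD η)) with hF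
  rw [tsum_congr (fun l : List E => show ENNReal.ofReal
      ((if η = η ∧ (∀ y ∈ η :: l, y ∉ B) ∧ l.getLastD η ∈ D then wre p η l else 0)
        / lam (l.getLastD η)) = F l by
    rw [hF]
    apply congrArg ENNReal.ofReal
    congr 1
    apply if_congr _ rfl rfl
    tauto)]
  rw [← (Equiv.sigmaFiberEquiv (fun l : List E => l.getLastD η)).tsum_eq (f := F)]
  rw [tsum_congr (fun c : Σ y : E, {x : List E // x.getLastD η = y} =>
    show F ((Equiv.sigmaFiberEquiv fun l : List E => l.getLastD η) c) = F c.2.1 from rfl)]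
  rw [ENNReal.tsum_sigma (f := fun (ξ : E) (l : {l : List E // l.getLastD η = ξ}) => F l.1)]
  apply tsum_congr
  intro ξ
  by_cases hξD : ξ ∈ D
  · rw [if_pos hξD]
    have hterm : ∀ l : {l : List E // l.getLastD η = ξ},
        F l.1 = (ENNReal.ofReal (lam ξ))⁻¹ *
          (if Gc B η ξ l.1 then wt p η l.1 else 0) := by
      rintro ⟨l, hl⟩
      rw [hF]
      simp only
      rw [hl]
      rw [ENNReal.ofReal_div_of_pos (hlam ξ), div_eq_mul_inv, mul_comm]
      congr 1
      by_cases hc : (∀ y ∈ η :: l, y ∉ B)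
      · rw [if_pos ⟨hc, hξD⟩, if_pos ⟨hc, hl⟩]
        rfl
      · rw [if_neg (by tauto), if_neg (by
          intro hGc
          exact hc hGc.1), ENNReal.ofReal_zero]
    rw [tsum_congr hterm, ENNReal.tsum_mul_left]
    congr 1
    rw [show Gfun p B η ξ = ∑' l : List E, ({l : List E | Gc B η ξ l}).indicator (wt p η) l
      from tsum_subtype _ _]
    rw [show (∑' l : {l : List E // l.getLastD η = ξ}, (if Gc B η ξ l.1 then wt p η l.1 else 0))
      = ∑' l : List E, ({l : List E | l.getLastD η = ξ}).indicator
          (fun l => if Gc B η ξ l then wt p η l else 0) l from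
        tsum_subtype {l : List E | l.getLastD η = ξ}
          (fun l => if Gc B η ξ l then wt p η l else 0)]
    apply tsum_congr
    intro l
    by_cases h1 : l.getLastD η = ξ
    · rw [Set.indicator_of_mem (by exact h1)]
      by_cases h2 : Gc B η ξ l
      · rw [if_pos h2, Set.indicator_of_mem (by exact h2)]
      · rw [if_neg h2, Set.indicator_of_notMem (by exact h2)]
    · rw [Set.indicator_of_notMem (by exact h1), Set.indicator_of_notMem (by
        intro h2
        exact h1 h2.2)]
  · rw [if_neg hξD]
    have hterm : ∀ l : {l : List E // l.getLastD η = ξ}, F l.1 = 0 := by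
      rintro ⟨l, hl⟩
      rw [hF]
      simp only
      rw [if_neg (by
        rintro ⟨h1, h2⟩
        rw [hl] at h2
        exact hξD h2), zero_div, ENNReal.ofReal_zero]
    rw [tsum_congr hterm, tsum_zero]

end main

end Occ

/-- Estimate (6.2): for a nonempty `B ⊆ E`, `η ∉ B` and any `D ⊆ E`, the expected time the
continuous-time chain started at `η` spends in `D` before hitting `B` is at most
`μ(D)/Cap({η},B)`. -/
theorem stmt2 {E : Type*} [Countable E] (R : E → E → ℝ) (μ : E → ℝ)
    (hR : IsRateMatrix R) (hirr : MCIrreducible (jumpProb R)) (hμ : IsRateStationary R μ)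
    (B : Set E) (hB : B.Nonempty) (η : E) (hη : η ∉ B) (D : Set E) :
    occupationTime (jumpProb R) (fun ξ => -R ξ ξ) D B η
      ≤ ENNReal.ofReal
          ((∑' ξ : D, μ ξ.1) / cap (jumpProb R) (fun ξ => -R ξ ξ * μ ξ) {η} B) := by
  classical
  have hp : ∀ a b, 0 ≤ jumpProb R a b := Occ.jp_nonneg hR
  have hrowp := Occ.row_sum_jp_enn hR
  have hq := Occ.pstar_nonneg hR hμ
  have hrowq := Occ.row_sum_star_enn hR hμ
  have hM : ∀ a, 0 < Occ.MM R μ a := Occ.MM_pos hR hμ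
  have hlam : ∀ a, 0 < -R a a := Occ.lam_pos hR
  have hrel := Occ.hrel_jp hR hμ
  have hrel' := Occ.hrel_star hR hμ
  have hMη0 : ENNReal.ofReal (Occ.MM R μ η) ≠ 0 := (ENNReal.ofReal_pos.mpr (hM η)).ne'
  have hMηT : ENNReal.ofReal (Occ.MM R μ η) ≠ ⊤ := ENNReal.ofReal_ne_top
  have h1 : occupationTime (jumpProb R) (fun ξ => -R ξ ξ) D B η
      = ∑' ξ : E, (if ξ ∈ D then (ENNReal.ofReal (-R ξ ξ))⁻¹ *
          Occ.Gfun (jumpProb R) B η ξ else 0) :=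
    Occ.occ_eq hp hlam B
  have hdiag : Occ.Gfun (Occ.pstar R μ) B η η = Occ.Gfun (jumpProb R) B η η := by
    have h2 := Occ.Gfun_rev hq hp hM hrel' B η η
    have h3 := congrArg (fun x => (ENNReal.ofReal (Occ.MM R μ η))⁻¹ * x) h2
    simpa [← mul_assoc, ENNReal.inv_mul_cancel hMη0 hMηT] using h3
  have hGle : ∀ ξ, Occ.Gfun (Occ.pstar R μ) B ξ η ≤ Occ.Gfun (jumpProb R) B η η := by
    intro ξ
    calc Occ.Gfun (Occ.pstar R μ) B ξ η
        ≤ Occ.Hfun (Occ.pstar R μ) B η ξ * Occ.Lfun (Occ.pstar R μ) B η :=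
          Occ.Gfun_le_Hfun_mul_Lfun hq B η ξ
      _ ≤ 1 * Occ.Lfun (Occ.pstar R μ) B η :=
          mul_le_mul_left (Occ.Hfun_le_one hq hrowq B η ξ) _
      _ = Occ.Gfun (Occ.pstar R μ) B η η := by rw [one_mul]; rfl
      _ = Occ.Gfun (jumpProb R) B η η := hdiag
  have hrev : ∀ ξ, ENNReal.ofReal (Occ.MM R μ η) * Occ.Gfun (jumpProb R) B η ξ
      = ENNReal.ofReal (Occ.MM R μ ξ) * Occ.Gfun (Occ.pstar R μ) B ξ η :=
    fun ξ => Occ.Gfun_rev hp hq hM hrel B η ξ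
  have key : ∀ ξ : E,
      (if ξ ∈ D then (ENNReal.ofReal (-R ξ ξ))⁻¹ * Occ.Gfun (jumpProb R) B η ξ else 0) *
        ENNReal.ofReal (Occ.MM R μ η)
      ≤ (if ξ ∈ D then ENNReal.ofReal (μ ξ) else 0) * Occ.Gfun (jumpProb R) B η η := by
    intro ξ
    by_cases hD : ξ ∈ D
    · rw [if_pos hD, if_pos hD]
      have e1 : (ENNReal.ofReal (-R ξ ξ))⁻¹ * Occ.Gfun (jumpProb R) B η ξ *
            ENNReal.ofReal (Occ.MM R μ η)
          = (ENNReal.ofReal (-R ξ ξ))⁻¹ *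
            (ENNReal.ofReal (Occ.MM R μ η) * Occ.Gfun (jumpProb R) B η ξ) := by ring
      rw [e1, hrev ξ]
      calc (ENNReal.ofReal (-R ξ ξ))⁻¹ *
            (ENNReal.ofReal (Occ.MM R μ ξ) * Occ.Gfun (Occ.pstar R μ) B ξ η)
          ≤ (ENNReal.ofReal (-R ξ ξ))⁻¹ *
            (ENNReal.ofReal (Occ.MM R μ ξ) * Occ.Gfun (jumpProb R) B η η) := by
            apply mul_le_mul_right
            apply mul_le_mul_right
            exact hGle ξ
        _ = ENNReal.ofReal (μ ξ) * Occ.Gfun (jumpProb R) B η η := by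
            rw [show Occ.MM R μ ξ = -R ξ ξ * μ ξ from rfl, ENNReal.ofReal_mul (hlam ξ).le,
              ← mul_assoc, ← mul_assoc,
              ENNReal.inv_mul_cancel (ENNReal.ofReal_pos.mpr (hlam ξ)).ne'
                ENNReal.ofReal_ne_top, one_mul]
    · simp [hD]
  have hocc_mul : occupationTime (jumpProb R) (fun ξ => -R ξ ξ) D B η *
        ENNReal.ofReal (Occ.MM R μ η)
      ≤ (∑' ξ : E, (if ξ ∈ D then ENNReal.ofReal (μ ξ) else 0)) *
        Occ.Gfun (jumpProb R) B η η := by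
    rw [h1, ← ENNReal.tsum_mul_right, ← ENNReal.tsum_mul_right]
    exact ENNReal.tsum_le_tsum key
  have hSμ : (∑' ξ : E, (if ξ ∈ D then ENNReal.ofReal (μ ξ) else 0))
      = ENNReal.ofReal (∑' ξ : D, μ ξ.1) := by
    rw [ENNReal.ofReal_tsum_of_nonneg (fun ξ : D => (hμ.pos _).le) (hμ.summable.subtype D)]
    rw [show (∑' ξ : ↥D, ENNReal.ofReal (μ ξ.1))
      = ∑' ξ : E, Set.indicator D (fun ξ => ENNReal.ofReal (μ ξ)) ξ from
        tsum_subtype D (fun ξ => ENNReal.ofReal (μ ξ))]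
    apply tsum_congr
    intro ξ
    rw [Set.indicator_apply]
  have hesc_pos : 0 < retProb (jumpProb R) η ({η} ∪ B) B :=
    Occ.retProb_pos hp hrowp hirr hB hη
  have hcap : cap (jumpProb R) (fun ξ => -R ξ ξ * μ ξ) {η} B
      = Occ.MM R μ η * retProb (jumpProb R) η ({η} ∪ B) B :=
    Occ.cap_singleton _ _ B η
  have hcap_pos : 0 < cap (jumpProb R) (fun ξ => -R ξ ξ * μ ξ) {η} B := by
    rw [hcap]
    exact mul_pos (hM η) hesc_pos
  have hofcap : ENNReal.ofReal (cap (jumpProb R) (fun ξ => -R ξ ξ * μ ξ) {η} B)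
      = ENNReal.ofReal (Occ.MM R μ η) * Occ.Efun (jumpProb R) B η := by
    rw [hcap, ENNReal.ofReal_mul (hM η).le, Occ.ofReal_retProb hp hrowp B hη]
  have hGE : Occ.Gfun (jumpProb R) B η η * Occ.Efun (jumpProb R) B η ≤ 1 :=
    Occ.Lfun_mul_Efun_le_one hp hrowp B hη
  have main : occupationTime (jumpProb R) (fun ξ => -R ξ ξ) D B η *
        ENNReal.ofReal (cap (jumpProb R) (fun ξ => -R ξ ξ * μ ξ) {η} B)
      ≤ ENNReal.ofReal (∑' ξ : D, μ ξ.1) := by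
    rw [hofcap]
    calc occupationTime (jumpProb R) (fun ξ => -R ξ ξ) D B η *
          (ENNReal.ofReal (Occ.MM R μ η) * Occ.Efun (jumpProb R) B η)
        = (occupationTime (jumpProb R) (fun ξ => -R ξ ξ) D B η *
            ENNReal.ofReal (Occ.MM R μ η)) * Occ.Efun (jumpProb R) B η := by ring
      _ ≤ ((∑' ξ : E, (if ξ ∈ D then ENNReal.ofReal (μ ξ) else 0)) *
            Occ.Gfun (jumpProb R) B η η) * Occ.Efun (jumpProb R) B η :=
          mul_le_mul_left hocc_mul _
      _ = (∑' ξ : E, (if ξ ∈ D then ENNReal.ofReal (μ ξ) else 0)) *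
            (Occ.Gfun (jumpProb R) B η η * Occ.Efun (jumpProb R) B η) := by ring
      _ ≤ (∑' ξ : E, (if ξ ∈ D then ENNReal.ofReal (μ ξ) else 0)) * 1 :=
          mul_le_mul_right hGE _
      _ = ENNReal.ofReal (∑' ξ : D, μ ξ.1) := by rw [mul_one, hSμ]
  rw [ENNReal.ofReal_div_of_pos hcap_pos]
  rw [ENNReal.le_div_iff_mul_le
    (Or.inl (ENNReal.ofReal_pos.mpr hcap_pos).ne') (Or.inl ENNReal.ofReal_ne_top)]
  exact main
end
end

section
/- Assume (H0): there are positive reals θ_N and, for every x ≠ y in S = {1,…,κ}, the limit r(x,y) := lim_{N→∞} θ_N r_N(ℰ^x_N, ℰ^y_N) exists; assume (H1): for each x ∈ S there are points ξ^N_x ∈ ℰ^x_N with lim_{N→∞} Cap_N(ℰ^x_N, Ĕ^x_N)/(inf_{η∈ℰ^x_N, η≠ξ^N_x} Cap_N({η},{ξ^N_x})) = 0; assume μ_N(ℰ^x_N) → m(x) with m(x) > 0 for every x ∈ S, and that Σ_{y≠x} r(x,y) > 0 for every x ∈ S. Then m is a stationary measure for the rates r: for every x ∈ S, Σ_{y≠x}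 m(y) r(y,x) = m(x) Σ_{y≠x} r(x,y). -/
open scoped Classical
open Filter Topology

noncomputable section

/-- `μ` is a stationary probability measure for the rate matrix `R`, charging every point,
with summable holding rates:  `Σ_η λ(η) μ(η) < ∞`. -/
structure IsStationaryRate {E : Type*} (R : E → E → ℝ) (μ : E → ℝ) : Prop where
  pos : ∀ η, 0 < μ η
  summable : Summable μ
  total : ∑' η, μ η = 1
  flux_summable : ∀ ξ, Summable fun η => μ η * R η ξ
  stat : ∀ ξ, ∑' η, μ η * R η ξ = 0
  lam_summable : Summable fun η => -R η η * μ η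

/-- The mean jump rate `r_N(A, T) = μ(A)^{-1} Σ_{η∈A} λ(η)μ(η) P_η[ℍ⁺_{ES} < ∞ and
Y_{ℍ⁺_{ES}} ∈ T]` of the trace process on `ES` from `A ⊆ ES` to `T ⊆ ES`. -/
def meanRate {E : Type*} (R : E → E → ℝ) (μ : E → ℝ) (A ES T : Set E) : ℝ :=
  (∑' η : A, μ η.1)⁻¹ * ∑' η : A, -R η.1 η.1 * μ η.1 * retProb (jumpProb R) η.1 ES T

namespace StmtAux
open ENNReal

variable {E : Type*}

/-- path weight in `ℝ≥0∞`. -/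
def W (q : E → E → ℝ≥0∞) {n : ℕ} (γ : Fin (n + 1) → E) : ℝ≥0∞ :=
  ∏ i : Fin n, q (γ i.castSucc) (γ i.succ)

def ret (q : E → E → ℝ≥0∞) (η : E) (S T : Set E) : ℝ≥0∞ :=
  ∑' x : Σ n : ℕ, Fin (n + 2) → E,
    if x.2 0 = η ∧ (∀ j : Fin (x.1 + 2), 0 < (j : ℕ) → (j : ℕ) < x.1 + 1 → x.2 j ∉ S) ∧
        x.2 (Fin.last (x.1 + 1)) ∈ T
      then W q x.2 else 0

def wn (q : E → E → ℝ≥0∞) (S T : Set E) (n : ℕ) (η : E) : ℝ≥0∞ :=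
  ∑' γ : Fin (n + 2) → E,
    if γ 0 = η ∧ (∀ j : Fin (n + 2), 0 < (j : ℕ) → (j : ℕ) < n + 1 → γ j ∉ S) ∧
        γ (Fin.last (n + 1)) ∈ T
      then W q γ else 0

def gn (q : E → E → ℝ≥0∞) (S : Set E) (n : ℕ) (η : E) : ℝ≥0∞ :=
  ∑' γ : Fin (n + 1) → E,
    if γ 0 = η ∧ (∀ j : Fin (n + 1), 0 < (j : ℕ) → γ j ∉ S) then W q γ else 0

def hitw (q : E → E → ℝ≥0∞) (T : Set E) (ζ : E) : ℝ≥0∞ :=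
  ∑' e, q ζ e * T.indicator 1 e

lemma ret_eq_tsum_wn (q : E → E → ℝ≥0∞) (η : E) (S T : Set E) :
    ret q η S T = ∑' n, wn q S T n η := by
  rw [ret, ENNReal.tsum_sigma']; rfl

lemma gn_zero (q : E → E → ℝ≥0∞) (S : Set E) (η : E) : gn q S 0 η = 1 := by
  rw [gn, ← (Equiv.funUnique (Fin 1) E).symm.tsum_eq]
  have : ∀ a : E,
      (if (fun _ : Fin 1 => a) 0 = η ∧
          (∀ j : Fin 1, 0 < (j : ℕ) → (fun _ : Fin 1 => a) j ∉ S)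
        then W q (fun _ : Fin 1 => a) else 0) = if a = η then 1 else 0 := by
    intro a
    have h1 : ∀ j : Fin 1, ¬ (0 < (j : ℕ)) := by intro j; have := j.isLt; omega
    have h2 : W q (fun _ : Fin 1 => a) = 1 := by
      rw [W]; simp
    simp only [h2]
    by_cases h : a = η <;> simp [h, h1]
  calc ∑' a : E, (if (fun _ : Fin 1 => a) 0 = η ∧
          (∀ j : Fin 1, 0 < (j : ℕ) → (fun _ : Fin 1 => a) j ∉ S)
        then W q (fun _ : Fin 1 => a) else 0)
      = ∑' a : E, if a = η then 1 else 0 := by exact tsum_congr this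
    _ = 1 := tsum_ite_eq η 1

lemma W_snoc (q : E → E → ℝ≥0∞) (n : ℕ) (δ : Fin (n + 1) → E) (e : E) :
    W q (Fin.snoc δ e : Fin (n + 2) → E) = W q δ * q (δ (Fin.last n)) e := by
  rw [W, Fin.prod_univ_castSucc, W]
  congr 1
  · refine Finset.prod_congr rfl fun i _ => ?_
    rw [Fin.succ_castSucc, Fin.snoc_castSucc, Fin.snoc_castSucc]
  · rw [Fin.succ_last, Fin.snoc_castSucc, Fin.snoc_last]

lemma snoc_cond_interior (S : Set E) (n : ℕ) (δ : Fin (n + 1) → E) (e : E) :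
    (∀ j : Fin (n + 2), 0 < (j : ℕ) → (j : ℕ) < n + 1 → (Fin.snoc δ e : Fin (n+2) → E) j ∉ S)
      ↔ ∀ j : Fin (n + 1), 0 < (j : ℕ) → δ j ∉ S := by
  constructor
  · intro H j hj
    have := H j.castSucc (by simpa using hj) (by simpa using j.isLt)
    rwa [Fin.snoc_castSucc] at this
  · intro H j h0 h1
    have hrw : (Fin.snoc δ e : Fin (n+2) → E) j = δ (j.castLT h1) := by
      conv_lhs => rw [← Fin.castSucc_castLT j h1]
      rw [Fin.snoc_castSucc]
    rw [hrw]
    exact H _ (by simpa using h0)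

lemma snoc_cond_all (S : Set E) (n : ℕ) (δ : Fin (n + 1) → E) (e : E) :
    (∀ j : Fin (n + 2), 0 < (j : ℕ) → (Fin.snoc δ e : Fin (n+2) → E) j ∉ S)
      ↔ (∀ j : Fin (n + 1), 0 < (j : ℕ) → δ j ∉ S) ∧ e ∉ S := by
  constructor
  · intro H
    refine ⟨fun j hj => ?_, ?_⟩
    · have := H j.castSucc (by simpa using hj)
      rwa [Fin.snoc_castSucc] at this
    · have := H (Fin.last (n+1)) (by simp)
      rwa [Fin.snoc_last] at this
  · rintro ⟨H, he⟩ j h0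
    induction j using Fin.lastCases with
    | last => rwa [Fin.snoc_last]
    | cast i => rw [Fin.snoc_castSucc]; exact H i (by simpa using h0)

lemma wn_eq (q : E → E → ℝ≥0∞) (S T : Set E) (n : ℕ) (η : E) :
    wn q S T n η = ∑' δ : Fin (n + 1) → E,
      (if δ 0 = η ∧ (∀ j : Fin (n + 1), 0 < (j : ℕ) → δ j ∉ S)
        then W q δ * hitw q T (δ (Fin.last n)) else 0) := by
  rw [wn, ← (Fin.snocEquiv (fun _ : Fin (n + 2) => E)).tsum_eq, ENNReal.tsum_prod',
    ENNReal.tsum_comm]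
  refine tsum_congr fun δ => ?_
  have hzero : ∀ e : E, (Fin.snoc δ e : Fin (n + 2) → E) 0 = δ 0 := by
    intro e
    have h : ((0 : Fin (n + 2))) = Fin.castSucc 0 := by simp
    rw [h, Fin.snoc_castSucc]
  have key : ∀ e : E,
      (if (Fin.snoc δ e : Fin (n + 2) → E) 0 = η ∧
          (∀ j : Fin (n + 2), 0 < (j : ℕ) → (j : ℕ) < n + 1 →
            (Fin.snoc δ e : Fin (n + 2) → E) j ∉ S) ∧
          (Fin.snoc δ e : Fin (n + 2) → E) (Fin.last (n + 1)) ∈ T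
        then W q (Fin.snoc δ e : Fin (n + 2) → E) else 0)
      = (if δ 0 = η ∧ (∀ j : Fin (n + 1), 0 < (j : ℕ) → δ j ∉ S)
        then W q δ * (q (δ (Fin.last n)) e * T.indicator 1 e) else 0) := by
    intro e
    rw [W_snoc]
    simp only [hzero, Fin.snoc_last, snoc_cond_interior]
    by_cases hc : δ 0 = η ∧ (∀ j : Fin (n + 1), 0 < (j : ℕ) → δ j ∉ S)
    · obtain ⟨h1, h2⟩ := hc
      by_cases he : e ∈ T <;>
        simp [h1, h2, he, Set.indicator_of_mem, Set.indicator_of_notMem, mul_assoc]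
    · rw [if_neg (by tauto), if_neg hc]
  calc (∑' e : E, if ((Fin.snocEquiv (fun _ : Fin (n + 2) => E)) (e, δ)) 0 = η ∧
          (∀ j : Fin (n + 2), 0 < (j : ℕ) → (j : ℕ) < n + 1 →
            ((Fin.snocEquiv (fun _ : Fin (n + 2) => E)) (e, δ)) j ∉ S) ∧
          ((Fin.snocEquiv (fun _ : Fin (n + 2) => E)) (e, δ)) (Fin.last (n + 1)) ∈ T
        then W q ((Fin.snocEquiv (fun _ : Fin (n + 2) => E)) (e, δ)) else 0)
      = ∑' e : E, (if δ 0 = η ∧ (∀ j : Fin (n + 1), 0 < (j : ℕ) → δ j ∉ S)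
          then W q δ * (q (δ (Fin.last n)) e * T.indicator 1 e) else 0) :=
        tsum_congr fun e => key e
    _ = (if δ 0 = η ∧ (∀ j : Fin (n + 1), 0 < (j : ℕ) → δ j ∉ S)
          then W q δ * hitw q T (δ (Fin.last n)) else 0) := by
        by_cases hc : δ 0 = η ∧ (∀ j : Fin (n + 1), 0 < (j : ℕ) → δ j ∉ S)
        · rw [if_pos hc, tsum_congr (fun e => if_pos hc), ENNReal.tsum_mul_left, hitw]
        · rw [if_neg hc, tsum_congr (fun e => if_neg hc), tsum_zero]

lemma gn_succ (q : E → E → ℝ≥0∞) (S : Set E) (n : ℕ) (η : E) :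
    gn q S (n + 1) η = ∑' δ : Fin (n + 1) → E,
      (if δ 0 = η ∧ (∀ j : Fin (n + 1), 0 < (j : ℕ) → δ j ∉ S)
        then W q δ * hitw q Sᶜ (δ (Fin.last n)) else 0) := by
  rw [gn, ← (Fin.snocEquiv (fun _ : Fin (n + 2) => E)).tsum_eq, ENNReal.tsum_prod',
    ENNReal.tsum_comm]
  refine tsum_congr fun δ => ?_
  have hzero : ∀ e : E, (Fin.snoc δ e : Fin (n + 2) → E) 0 = δ 0 := by
    intro e
    have h : ((0 : Fin (n + 2))) = Fin.castSucc 0 := by simp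
    rw [h, Fin.snoc_castSucc]
  have key : ∀ e : E,
      (if (Fin.snoc δ e : Fin (n + 2) → E) 0 = η ∧
          (∀ j : Fin (n + 2), 0 < (j : ℕ) → (Fin.snoc δ e : Fin (n + 2) → E) j ∉ S)
        then W q (Fin.snoc δ e : Fin (n + 2) → E) else 0)
      = (if δ 0 = η ∧ (∀ j : Fin (n + 1), 0 < (j : ℕ) → δ j ∉ S)
        then W q δ * (q (δ (Fin.last n)) e * Sᶜ.indicator 1 e) else 0) := by
    intro e
    rw [W_snoc]
    simp only [hzero, snoc_cond_all]
    by_cases hc : δ 0 = η ∧ (∀ j : Fin (n + 1), 0 < (j : ℕ) → δ j ∉ S)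
    · obtain ⟨h1, h2⟩ := hc
      by_cases he : e ∈ S
      · rw [if_neg (by tauto), if_pos ⟨h1, h2⟩,
          Set.indicator_of_notMem (by simpa using he), mul_zero, mul_zero]
      · rw [if_pos ⟨h1, h2, he⟩, if_pos ⟨h1, h2⟩,
          Set.indicator_of_mem (by simpa using he), Pi.one_apply, mul_one]
    · rw [if_neg (by tauto), if_neg hc]
  calc (∑' e : E, if ((Fin.snocEquiv (fun _ : Fin (n + 2) => E)) (e, δ)) 0 = η ∧
          (∀ j : Fin (n + 2), 0 < (j : ℕ) →
            ((Fin.snocEquiv (fun _ : Fin (n + 2) => E)) (e, δ)) j ∉ S)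
        then W q ((Fin.snocEquiv (fun _ : Fin (n + 2) => E)) (e, δ)) else 0)
      = ∑' e : E, (if δ 0 = η ∧ (∀ j : Fin (n + 1), 0 < (j : ℕ) → δ j ∉ S)
          then W q δ * (q (δ (Fin.last n)) e * Sᶜ.indicator 1 e) else 0) :=
        tsum_congr fun e => key e
    _ = _ := by
        by_cases hc : δ 0 = η ∧ (∀ j : Fin (n + 1), 0 < (j : ℕ) → δ j ∉ S)
        · rw [if_pos hc, tsum_congr (fun e => if_pos hc), ENNReal.tsum_mul_left, hitw]
        · rw [if_neg hc, tsum_congr (fun e => if_neg hc), tsum_zero]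

section Row
variable {q : E → E → ℝ≥0∞}

lemma hitw_add_compl (hrow : ∀ η, ∑' ξ, q η ξ = 1) (T : Set E) (ζ : E) : hitw q T ζ + hitw q Tᶜ ζ = 1 := by
  rw [hitw, hitw, ← ENNReal.tsum_add]
  rw [← hrow ζ]
  refine tsum_congr fun e => ?_
  by_cases he : e ∈ T
  · rw [Set.indicator_of_mem he, Set.indicator_of_notMem (by simpa using he)]
    simp
  · rw [Set.indicator_of_notMem he, Set.indicator_of_mem (by simpa using he)]
    simp

lemma wn_add_gn (hrow : ∀ η, ∑' ξ, q η ξ = 1) (S : Set E) (n : ℕ) (η : E) :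
    wn q S S n η + gn q S (n + 1) η = gn q S n η := by
  rw [wn_eq, gn_succ, ← ENNReal.tsum_add]
  rw [gn]
  refine tsum_congr fun δ => ?_
  by_cases hc : δ 0 = η ∧ (∀ j : Fin (n + 1), 0 < (j : ℕ) → δ j ∉ S)
  · rw [if_pos hc, if_pos hc, if_pos hc, ← mul_add, hitw_add_compl hrow, mul_one]
  · rw [if_neg hc, if_neg hc, if_neg hc, add_zero]

lemma sum_wn_add_gn (hrow : ∀ η, ∑' ξ, q η ξ = 1) (S : Set E) (N : ℕ) (η : E) :
    (∑ k ∈ Finset.range N, wn q S S k η) + gn q S N η = 1 := by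
  induction N with
  | zero => simp [gn_zero]
  | succ N ih =>
    rw [Finset.sum_range_succ, add_assoc, wn_add_gn hrow, ih]

lemma sum_wn_le_one (hrow : ∀ η, ∑' ξ, q η ξ = 1) (S : Set E) (N : ℕ) (η : E) :
    (∑ k ∈ Finset.range N, wn q S S k η) ≤ 1 :=
  le_of_le_of_eq (le_add_right le_rfl) (sum_wn_add_gn hrow S N η)

lemma tsum_wn_le_one (hrow : ∀ η, ∑' ξ, q η ξ = 1) (S : Set E) (η : E) : (∑' n, wn q S S n η) ≤ 1 := by
  rw [ENNReal.tsum_eq_iSup_sum]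
  refine iSup_le fun s => ?_
  obtain ⟨N, hN⟩ := s.exists_nat_subset_range
  calc ∑ k ∈ s, wn q S S k η ≤ ∑ k ∈ Finset.range N, wn q S S k η :=
        Finset.sum_le_sum_of_subset hN
    _ ≤ 1 := sum_wn_le_one hrow S N η

lemma ret_le_ret_self (S T : Set E) (hT : T ⊆ S) (η : E) :
    ret q η S T ≤ ∑' n, wn q S S n η := by
  rw [ret_eq_tsum_wn]
  refine ENNReal.tsum_le_tsum fun n => ?_
  rw [wn, wn]
  refine ENNReal.tsum_le_tsum fun γ => ?_
  by_cases hc : γ 0 = η ∧ (∀ j : Fin (n + 2), 0 < (j : ℕ) → (j : ℕ) < n + 1 → γ j ∉ S) ∧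
      γ (Fin.last (n + 1)) ∈ T
  · rw [if_pos hc, if_pos ⟨hc.1, hc.2.1, hT hc.2.2⟩]
  · rw [if_neg hc]; exact zero_le

lemma ret_le_one (hrow : ∀ η, ∑' ξ, q η ξ = 1) (S T : Set E) (hT : T ⊆ S) (η : E) : ret q η S T ≤ 1 :=
  (ret_le_ret_self S T hT η).trans (tsum_wn_le_one hrow S η)

end Row

lemma W_cons (q : E → E → ℝ≥0∞) (n : ℕ) (a : E) (τ : Fin (n + 1) → E) :
    W q (Fin.cons a τ : Fin (n + 2) → E) = q a (τ 0) * W q τ := by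
  rw [W, Fin.prod_univ_succ, W]
  congr 1

lemma cons_cond (S : Set E) (n : ℕ) (a : E) (τ : Fin (n + 1) → E) :
    (∀ j : Fin (n + 2), 0 < (j : ℕ) → (Fin.cons a τ : Fin (n + 2) → E) j ∉ S)
      ↔ ∀ i : Fin (n + 1), τ i ∉ S := by
  constructor
  · intro H i
    have := H i.succ (by simp)
    rwa [Fin.cons_succ] at this
  · intro H j h0
    have hj : j ≠ 0 := by
      intro h; rw [h] at h0; simp at h0
    rw [← Fin.succ_pred j hj, Fin.cons_succ]
    exact H _

lemma all_split (S : Set E) (n : ℕ) (τ : Fin (n + 1) → E) :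
    (∀ i : Fin (n + 1), τ i ∉ S)
      ↔ τ 0 ∉ S ∧ ∀ i : Fin (n + 1), 0 < (i : ℕ) → τ i ∉ S := by
  constructor
  · exact fun H => ⟨H 0, fun i _ => H i⟩
  · rintro ⟨h0, H⟩ i
    by_cases hi : (i : ℕ) = 0
    · have : i = 0 := by ext; simpa using hi
      rwa [this]
    · exact H i (Nat.pos_of_ne_zero hi)

lemma gn_cons (q : E → E → ℝ≥0∞) (S : Set E) (n : ℕ) (η : E) :
    gn q S (n + 1) η = ∑' ζ, q η ζ * Sᶜ.indicator (gn q S n) ζ := by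
  rw [gn, ← (Fin.consEquiv (fun _ : Fin (n + 2) => E)).tsum_eq, ENNReal.tsum_prod']
  have key : ∀ (a : E) (τ : Fin (n + 1) → E),
      (if (Fin.cons a τ : Fin (n + 2) → E) 0 = η ∧
          (∀ j : Fin (n + 2), 0 < (j : ℕ) → (Fin.cons a τ : Fin (n + 2) → E) j ∉ S)
        then W q (Fin.cons a τ : Fin (n + 2) → E) else 0)
      = (if a = η ∧ (∀ i : Fin (n + 1), τ i ∉ S) then q a (τ 0) * W q τ else 0) := by
    intro a τ
    rw [W_cons]
    simp only [Fin.cons_zero, cons_cond]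
  calc (∑' (a : E) (τ : Fin (n + 1) → E),
        if ((Fin.consEquiv (fun _ : Fin (n + 2) => E)) (a, τ)) 0 = η ∧
            (∀ j : Fin (n + 2), 0 < (j : ℕ) →
              ((Fin.consEquiv (fun _ : Fin (n + 2) => E)) (a, τ)) j ∉ S)
          then W q ((Fin.consEquiv (fun _ : Fin (n + 2) => E)) (a, τ)) else 0)
      = ∑' (a : E) (τ : Fin (n + 1) → E),
          (if a = η ∧ (∀ i : Fin (n + 1), τ i ∉ S) then q a (τ 0) * W q τ else 0) :=
        tsum_congr fun a => tsum_congr fun τ => key a τ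
    _ = ∑' τ : Fin (n + 1) → E,
          (if (∀ i : Fin (n + 1), τ i ∉ S) then q η (τ 0) * W q τ else 0) := by
        rw [tsum_eq_single η]
        · exact tsum_congr fun τ => by by_cases h : ∀ i : Fin (n + 1), τ i ∉ S <;> simp [h]
        · intro a ha
          refine ENNReal.tsum_eq_zero.mpr fun τ => ?_
          rw [if_neg (by tauto)]
    _ = ∑' (ζ : E) (τ : Fin (n + 1) → E),
          (if τ 0 = ζ ∧ (∀ i : Fin (n + 1), τ i ∉ S) then q η ζ * W q τ else 0) := by
        rw [ENNReal.tsum_comm]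
        refine tsum_congr fun τ => ?_
        rw [tsum_eq_single (τ 0)]
        · by_cases h : ∀ i : Fin (n + 1), τ i ∉ S <;> simp [h]
        · intro ζ hζ
          rw [if_neg (by tauto)]
    _ = ∑' ζ, q η ζ * Sᶜ.indicator (gn q S n) ζ := by
        refine tsum_congr fun ζ => ?_
        by_cases hζ : ζ ∈ S
        · rw [Set.indicator_of_notMem (by simpa using hζ), mul_zero]
          refine ENNReal.tsum_eq_zero.mpr fun τ => ?_
          refine if_neg fun hcond => ?_
          exact ((all_split S n τ).mp hcond.2).1 (hcond.1 ▸ hζ)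
        · rw [Set.indicator_of_mem (by simpa using hζ), gn, ← ENNReal.tsum_mul_left]
          refine tsum_congr fun τ => ?_
          by_cases hc : τ 0 = ζ ∧ (∀ i : Fin (n + 1), 0 < (i : ℕ) → τ i ∉ S)
          · rw [if_pos ⟨hc.1, (all_split S n τ).mpr ⟨hc.1 ▸ hζ, hc.2⟩⟩, if_pos hc]
          · rw [if_neg (fun h => hc ⟨h.1, fun i _ => h.2 i⟩), if_neg hc, mul_zero]

lemma tsum_split_S (S : Set E) (f : E → ℝ≥0∞) :
    ∑' η, f η = (∑' η, S.indicator f η) + ∑' η, Sᶜ.indicator f η := by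
  rw [← ENNReal.tsum_add]
  refine tsum_congr fun η => ?_
  by_cases h : η ∈ S
  · rw [Set.indicator_of_mem h, Set.indicator_of_notMem (by simpa using h), add_zero]
  · rw [Set.indicator_of_notMem h, Set.indicator_of_mem (by simpa using h), zero_add]

lemma t_rec (q : E → E → ℝ≥0∞) (Mq : E → ℝ≥0∞)
    (hinv : ∀ ξ, ∑' η, Mq η * q η ξ = Mq ξ) (S : Set E) (n : ℕ) :
    ∑' η, Mq η * gn q S (n + 1) η = ∑' ζ, Mq ζ * Sᶜ.indicator (gn q S n) ζ := by
  calc ∑' η, Mq η * gn q S (n + 1) η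
      = ∑' (η : E) (ζ : E), Mq η * (q η ζ * Sᶜ.indicator (gn q S n) ζ) := by
        refine tsum_congr fun η => ?_
        rw [gn_cons, ENNReal.tsum_mul_left]
    _ = ∑' (ζ : E) (η : E), Mq η * q η ζ * Sᶜ.indicator (gn q S n) ζ := by
        rw [ENNReal.tsum_comm]
        exact tsum_congr fun ζ => tsum_congr fun η => by ring
    _ = ∑' ζ, Mq ζ * Sᶜ.indicator (gn q S n) ζ := by
        refine tsum_congr fun ζ => ?_
        rw [ENNReal.tsum_mul_right, hinv]

theorem gn_iInf_eq_zero_on (q : E → E → ℝ≥0∞) (Mq : E → ℝ≥0∞) (S : Set E)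
    (hinv : ∀ ξ, ∑' η, Mq η * q η ξ = Mq ξ)
    (hpos : ∀ η, Mq η ≠ 0)
    (htot : ∑' η, Mq η ≠ ⊤) :
    ∀ ζ ∈ S, (⨅ n, gn q S n ζ) = 0 := by
  set L : E → ℝ≥0∞ := fun ζ => ⨅ n, gn q S n ζ with hLdef
  set A : ℝ≥0∞ := ∑' ζ, S.indicator (fun ζ => Mq ζ * L ζ) ζ with hAdef
  set t : ℕ → ℝ≥0∞ := fun n => ∑' η, Mq η * gn q S n η with htdef
  have ht0 : t 0 = ∑' η, Mq η := tsum_congr fun η => by rw [gn_zero, mul_one]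
  have hstep : ∀ n, t n = (∑' ζ, S.indicator (fun ζ => Mq ζ * gn q S n ζ) ζ) + t (n + 1) := by
    intro n
    have h1 : t (n + 1) = ∑' ζ, Sᶜ.indicator (fun ζ => Mq ζ * gn q S n ζ) ζ := by
      show (∑' η, Mq η * gn q S (n + 1) η) = _
      rw [t_rec q Mq hinv S n]
      refine tsum_congr fun ζ => ?_
      by_cases h : ζ ∈ S
      · rw [Set.indicator_of_notMem (by simpa using h),
          Set.indicator_of_notMem (by simpa using h), mul_zero]
      · rw [Set.indicator_of_mem (by simpa using h), Set.indicator_of_mem (by simpa using h)]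
    rw [h1]
    show (∑' η, Mq η * gn q S n η) = _
    exact tsum_split_S S (fun η => Mq η * gn q S n η)
  have hA_le : ∀ n, A ≤ ∑' ζ, S.indicator (fun ζ => Mq ζ * gn q S n ζ) ζ := by
    intro n
    refine ENNReal.tsum_le_tsum fun ζ => ?_
    by_cases h : ζ ∈ S
    · rw [Set.indicator_of_mem h, Set.indicator_of_mem h]
      exact mul_le_mul_right (iInf_le _ n) _
    · rw [Set.indicator_of_notMem h, Set.indicator_of_notMem h]
  have hsum : ∀ N : ℕ, (N : ℝ≥0∞) * A ≤ t 0 := by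
    intro N
    have key : (∑ k ∈ Finset.range N, ∑' ζ, S.indicator (fun ζ => Mq ζ * gn q S k ζ) ζ)
        + t N = t 0 := by
      induction N with
      | zero => simp
      | succ N ih =>
        rw [Finset.sum_range_succ, add_assoc, ← hstep N, ih]
    calc (N : ℝ≥0∞) * A = ∑ _k ∈ Finset.range N, A := by
          rw [Finset.sum_const, Finset.card_range, nsmul_eq_mul]
      _ ≤ ∑ k ∈ Finset.range N, ∑' ζ, S.indicator (fun ζ => Mq ζ * gn q S k ζ) ζ :=
          Finset.sum_le_sum fun k _ => hA_le k
      _ ≤ t 0 := le_of_le_of_eq (le_add_right le_rfl) key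
  have hA0 : A = 0 := by
    by_contra hA0
    have ht0fin : t 0 ≠ ⊤ := by rw [ht0]; exact htot
    have hdiv : t 0 / A ≠ ⊤ := (ENNReal.div_lt_top ht0fin hA0).ne
    obtain ⟨N, hN⟩ := ENNReal.exists_nat_gt hdiv
    have hlt : t 0 < (N : ℝ≥0∞) * A := by
      rw [← ENNReal.div_lt_iff (Or.inl hA0) (Or.inr ht0fin)]
      exact hN
    exact absurd (hsum N) (not_le.mpr hlt)
  intro ζ hζ
  have h2 : S.indicator (fun ζ => Mq ζ * L ζ) ζ = 0 :=
    ENNReal.tsum_eq_zero.mp hA0 ζ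
  rw [Set.indicator_of_mem hζ] at h2
  rcases mul_eq_zero.mp h2 with h | h
  · exact absurd h (hpos ζ)
  · exact h

theorem ret_self_eq_one (q : E → E → ℝ≥0∞) (Mq : E → ℝ≥0∞) (S : Set E)
    (hrow : ∀ η, ∑' ξ, q η ξ = 1)
    (hinv : ∀ ξ, ∑' η, Mq η * q η ξ = Mq ξ)
    (hpos : ∀ η, Mq η ≠ 0)
    (htot : ∑' η, Mq η ≠ ⊤)
    {ζ : E} (hζ : ζ ∈ S) :
    ret q ζ S S = 1 := by
  have hL := gn_iInf_eq_zero_on q Mq S hinv hpos htot ζ hζ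
  refine le_antisymm (ret_le_one hrow S S le_rfl ζ) ?_
  have h1 : ∀ N : ℕ, (1 : ℝ≥0∞) ≤ ret q ζ S S + gn q S N ζ := by
    intro N
    rw [ret_eq_tsum_wn]
    calc (1 : ℝ≥0∞) = (∑ k ∈ Finset.range N, wn q S S k ζ) + gn q S N ζ :=
          (sum_wn_add_gn hrow S N ζ).symm
      _ ≤ _ := add_le_add_left (ENNReal.sum_le_tsum _) _
  calc (1 : ℝ≥0∞) ≤ ⨅ N : ℕ, (ret q ζ S S + gn q S N ζ) := le_iInf h1
    _ = ret q ζ S S + ⨅ N : ℕ, gn q S N ζ := ENNReal.add_iInf.symm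
    _ = ret q ζ S S := by rw [hL, add_zero]

def qrev (q : E → E → ℝ≥0∞) (Mq : E → ℝ≥0∞) (η ξ : E) : ℝ≥0∞ :=
  Mq ξ * q ξ η / Mq η

lemma Mq_mul_qrev (q : E → E → ℝ≥0∞) (Mq : E → ℝ≥0∞)
    (hpos : ∀ η, Mq η ≠ 0) (hfin : ∀ η, Mq η ≠ ⊤) (a b : E) :
    Mq a * qrev q Mq a b = Mq b * q b a := by
  rw [qrev, ENNReal.mul_div_cancel (hpos a) (hfin a)]

lemma rev_zero' (m : ℕ) : (Fin.rev 0 : Fin (m + 1)) = Fin.last m := by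
  ext; simp [Fin.val_rev]

lemma rev_last' (n : ℕ) : ((Fin.last (n + 1)).rev : Fin (n + 2)) = 0 := by
  ext; simp [Fin.val_rev]

lemma W_rev (q : E → E → ℝ≥0∞) (Mq : E → ℝ≥0∞)
    (hpos : ∀ η, Mq η ≠ 0) (hfin : ∀ η, Mq η ≠ ⊤) :
    ∀ (n : ℕ) (γ : Fin (n + 1) → E),
      Mq (γ (Fin.last n)) * W (qrev q Mq) (γ ∘ Fin.rev) = Mq (γ 0) * W q γ := by
  intro n
  induction n with
  | zero =>
    intro γ
    have h1 : W (qrev q Mq) (γ ∘ Fin.rev) = 1 := by rw [W]; simp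
    have h2 : W q γ = 1 := by rw [W]; simp
    rw [h1, h2]
    rfl
  | succ n ih =>
    intro γ
    set δ : Fin (n + 1) → E := γ ∘ Fin.castSucc with hδ
    have hWγ : W q γ = W q δ * q (γ (Fin.castSucc (Fin.last n))) (γ (Fin.last (n + 1))) := by
      rw [W, Fin.prod_univ_castSucc, Fin.succ_last]
      rfl
    have e1 : (γ ∘ Fin.rev) (Fin.castSucc (0 : Fin (n + 1))) = γ (Fin.last (n + 1)) := by
      show γ ((Fin.castSucc (0 : Fin (n + 1))).rev) = _
      rw [Fin.castSucc_zero, rev_zero']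
    have e2 : (γ ∘ Fin.rev) (Fin.succ (0 : Fin (n + 1))) = γ (Fin.castSucc (Fin.last n)) := by
      show γ ((Fin.succ (0 : Fin (n + 1))).rev) = _
      rw [Fin.rev_succ, rev_zero']
    have e5 : ∀ i : Fin n,
        qrev q Mq ((γ ∘ Fin.rev) (Fin.succ i).castSucc) ((γ ∘ Fin.rev) (Fin.succ i).succ)
          = qrev q Mq ((δ ∘ Fin.rev) i.castSucc) ((δ ∘ Fin.rev) i.succ) := by
      intro i
      have a1 : (γ ∘ Fin.rev) (Fin.succ i).castSucc = (δ ∘ Fin.rev) i.castSucc := by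
        show γ (((Fin.succ i).castSucc).rev) = γ ((i.castSucc.rev).castSucc)
        rw [Fin.rev_castSucc, Fin.rev_succ, Fin.rev_castSucc]
        rfl
      have a2 : (γ ∘ Fin.rev) (Fin.succ i).succ = (δ ∘ Fin.rev) i.succ := by
        show γ (((Fin.succ i).succ).rev) = γ ((i.succ.rev).castSucc)
        rw [Fin.rev_succ]
      rw [a1, a2]
    have hWρ : W (qrev q Mq) (γ ∘ Fin.rev)
        = qrev q Mq (γ (Fin.last (n + 1))) (γ (Fin.castSucc (Fin.last n)))
          * W (qrev q Mq) (δ ∘ Fin.rev) := by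
      rw [W, Fin.prod_univ_succ, Finset.prod_congr rfl (fun i _ => e5 i), e1, e2]
      rfl
    have hlast : δ (Fin.last n) = γ (Fin.castSucc (Fin.last n)) := rfl
    have hzero : δ 0 = γ 0 := by
      show γ (Fin.castSucc 0) = γ 0
      rw [Fin.castSucc_zero]
    calc Mq (γ (Fin.last (n + 1))) * W (qrev q Mq) (γ ∘ Fin.rev)
        = (Mq (γ (Fin.last (n + 1)))
            * qrev q Mq (γ (Fin.last (n + 1))) (γ (Fin.castSucc (Fin.last n))))
            * W (qrev q Mq) (δ ∘ Fin.rev) := by rw [hWρ, mul_assoc]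
      _ = (Mq (γ (Fin.castSucc (Fin.last n)))
            * q (γ (Fin.castSucc (Fin.last n))) (γ (Fin.last (n + 1))))
            * W (qrev q Mq) (δ ∘ Fin.rev) := by
          rw [Mq_mul_qrev q Mq hpos hfin]
      _ = q (γ (Fin.castSucc (Fin.last n))) (γ (Fin.last (n + 1)))
            * (Mq (δ (Fin.last n)) * W (qrev q Mq) (δ ∘ Fin.rev)) := by
          rw [hlast]; ring
      _ = q (γ (Fin.castSucc (Fin.last n))) (γ (Fin.last (n + 1)))
            * (Mq (δ 0) * W q δ) := by rw [ih δ]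
      _ = Mq (γ 0) * W q γ := by rw [hzero, hWγ]; ring

lemma cond_rev (S : Set E) (n : ℕ) (γ : Fin (n + 2) → E)
    (H : ∀ j : Fin (n + 2), 0 < (j : ℕ) → (j : ℕ) < n + 1 → γ j ∉ S) :
    ∀ j : Fin (n + 2), 0 < (j : ℕ) → (j : ℕ) < n + 1 → (γ ∘ Fin.rev) j ∉ S := by
  intro j h0 h1
  have hv : ((j.rev : Fin (n + 2)) : ℕ) = n + 1 - (j : ℕ) := by
    rw [Fin.val_rev]; omega
  exact H j.rev (by omega) (by omega)

def revE : (Σ n : ℕ, Fin (n + 2) → E) ≃ (Σ n : ℕ, Fin (n + 2) → E) where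
  toFun x := ⟨x.1, x.2 ∘ Fin.rev⟩
  invFun x := ⟨x.1, x.2 ∘ Fin.rev⟩
  left_inv x := by
    obtain ⟨n, γ⟩ := x
    have h : (γ ∘ Fin.rev) ∘ Fin.rev = γ := funext fun i => by
      simp [Function.comp, Fin.rev_rev]
    show (⟨n, (γ ∘ Fin.rev) ∘ Fin.rev⟩ : Σ n : ℕ, Fin (n + 2) → E) = ⟨n, γ⟩
    rw [h]
  right_inv x := by
    obtain ⟨n, γ⟩ := x
    have h : (γ ∘ Fin.rev) ∘ Fin.rev = γ := funext fun i => by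
      simp [Function.comp, Fin.rev_rev]
    show (⟨n, (γ ∘ Fin.rev) ∘ Fin.rev⟩ : Σ n : ℕ, Fin (n + 2) → E) = ⟨n, γ⟩
    rw [h]

/-- Collapse of the start-point sum into a single big path sum. -/
lemma tsum_ind_ret (q : E → E → ℝ≥0∞) (v : E → ℝ≥0∞) (A S T : Set E) :
    (∑' η, A.indicator (fun η => v η * ret q η S T) η)
      = ∑' x : Σ n : ℕ, Fin (n + 2) → E,
          if x.2 0 ∈ A ∧ (∀ j : Fin (x.1 + 2), 0 < (j : ℕ) → (j : ℕ) < x.1 + 1 → x.2 j ∉ S) ∧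
              x.2 (Fin.last (x.1 + 1)) ∈ T
            then v (x.2 0) * W q x.2 else 0 := by
  have step1 : ∀ η, A.indicator (fun η => v η * ret q η S T) η
      = ∑' x : Σ n : ℕ, Fin (n + 2) → E,
          if x.2 0 = η ∧ η ∈ A ∧
              (∀ j : Fin (x.1 + 2), 0 < (j : ℕ) → (j : ℕ) < x.1 + 1 → x.2 j ∉ S) ∧
              x.2 (Fin.last (x.1 + 1)) ∈ T
            then v η * W q x.2 else 0 := by
    intro η
    by_cases hη : η ∈ A
    · rw [Set.indicator_of_mem hη, ret, ← ENNReal.tsum_mul_left]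
      refine tsum_congr fun x => ?_
      by_cases hc : x.2 0 = η ∧
          (∀ j : Fin (x.1 + 2), 0 < (j : ℕ) → (j : ℕ) < x.1 + 1 → x.2 j ∉ S) ∧
          x.2 (Fin.last (x.1 + 1)) ∈ T
      · rw [if_pos hc, if_pos ⟨hc.1, hη, hc.2.1, hc.2.2⟩]
      · rw [if_neg hc, if_neg (by tauto), mul_zero]
    · rw [Set.indicator_of_notMem hη]
      symm
      exact ENNReal.tsum_eq_zero.mpr fun x => if_neg (by tauto)
  rw [tsum_congr step1, ENNReal.tsum_comm]
  refine tsum_congr fun x => ?_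
  rw [tsum_eq_single (x.2 0)]
  · by_cases hc : x.2 0 ∈ A ∧
        (∀ j : Fin (x.1 + 2), 0 < (j : ℕ) → (j : ℕ) < x.1 + 1 → x.2 j ∉ S) ∧
        x.2 (Fin.last (x.1 + 1)) ∈ T
    · rw [if_pos ⟨rfl, hc⟩, if_pos hc]
    · rw [if_neg (by tauto), if_neg hc]
  · intro η hη
    exact if_neg (by tauto)

theorem weighted_ret (q : E → E → ℝ≥0∞) (Mq : E → ℝ≥0∞)
    (hpos : ∀ η, Mq η ≠ 0) (hfin : ∀ η, Mq η ≠ ⊤) (A S T : Set E) :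
    (∑' η, A.indicator (fun η => Mq η * ret q η S T) η)
      = ∑' ξ, T.indicator (fun ξ => Mq ξ * ret (qrev q Mq) ξ S A) ξ := by
  rw [tsum_ind_ret, tsum_ind_ret]
  rw [← (revE (E := E)).tsum_eq]
  refine tsum_congr fun x => ?_
  obtain ⟨n, γ⟩ := x
  show (if (γ ∘ Fin.rev) 0 ∈ A ∧
      (∀ j : Fin (n + 2), 0 < (j : ℕ) → (j : ℕ) < n + 1 → (γ ∘ Fin.rev) j ∉ S) ∧
      (γ ∘ Fin.rev) (Fin.last (n + 1)) ∈ T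
    then Mq ((γ ∘ Fin.rev) 0) * W q (γ ∘ Fin.rev) else 0)
    = (if γ 0 ∈ T ∧
        (∀ j : Fin (n + 2), 0 < (j : ℕ) → (j : ℕ) < n + 1 → γ j ∉ S) ∧
        γ (Fin.last (n + 1)) ∈ A
      then Mq (γ 0) * W (qrev q Mq) γ else 0)
  have h0 : (γ ∘ Fin.rev) 0 = γ (Fin.last (n + 1)) := by
    show γ (Fin.rev 0) = _
    rw [rev_zero']
  have hl : (γ ∘ Fin.rev) (Fin.last (n + 1)) = γ 0 := by
    show γ ((Fin.last (n + 1)).rev) = _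
    rw [rev_last']
  have hρ : (γ ∘ Fin.rev) ∘ Fin.rev = γ := funext fun i => by
    simp [Function.comp, Fin.rev_rev]
  have hW := W_rev q Mq hpos hfin (n + 1) (γ ∘ Fin.rev)
  rw [hρ, hl, h0] at hW
  -- hW : Mq (γ 0) * W (qrev q Mq) γ = Mq (γ (Fin.last (n+1))) * W q (γ ∘ Fin.rev)
  have hcond : (∀ j : Fin (n + 2), 0 < (j : ℕ) → (j : ℕ) < n + 1 → (γ ∘ Fin.rev) j ∉ S)
      ↔ (∀ j : Fin (n + 2), 0 < (j : ℕ) → (j : ℕ) < n + 1 → γ j ∉ S) := by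
    constructor
    · intro H
      have h2 := cond_rev S n (γ ∘ Fin.rev) H
      refine fun j hj hj' => ?_
      have h3 := h2 j hj hj'
      rw [show (γ ∘ Fin.rev) ∘ Fin.rev = γ from hρ] at h3
      exact h3
    · exact cond_rev S n γ
  rw [h0, hl]
  by_cases hc : γ 0 ∈ T ∧
      (∀ j : Fin (n + 2), 0 < (j : ℕ) → (j : ℕ) < n + 1 → γ j ∉ S) ∧
      γ (Fin.last (n + 1)) ∈ A
  · rw [if_pos ⟨hc.2.2, hcond.mpr hc.2.1, hc.1⟩, if_pos hc]
    exact hW.symm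
  · rw [if_neg (fun h => hc ⟨h.2.2, hcond.mp h.2.1, h.1⟩), if_neg hc]

lemma qrev_row (q : E → E → ℝ≥0∞) (Mq : E → ℝ≥0∞)
    (hinv : ∀ ξ, ∑' η, Mq η * q η ξ = Mq ξ)
    (hpos : ∀ η, Mq η ≠ 0) (hfin : ∀ η, Mq η ≠ ⊤) :
    ∀ η, ∑' ξ, qrev q Mq η ξ = 1 := by
  intro η
  calc ∑' ξ, qrev q Mq η ξ = ∑' ξ, (Mq ξ * q ξ η) * (Mq η)⁻¹ := by
        refine tsum_congr fun ξ => ?_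
        rw [qrev, ENNReal.div_eq_inv_mul, mul_comm]
    _ = (∑' ξ, Mq ξ * q ξ η) * (Mq η)⁻¹ := ENNReal.tsum_mul_right
    _ = Mq η * (Mq η)⁻¹ := by rw [hinv]
    _ = 1 := ENNReal.mul_inv_cancel (hpos η) (hfin η)

lemma qrev_inv (q : E → E → ℝ≥0∞) (Mq : E → ℝ≥0∞)
    (hrow : ∀ η, ∑' ξ, q η ξ = 1)
    (hpos : ∀ η, Mq η ≠ 0) (hfin : ∀ η, Mq η ≠ ⊤) :
    ∀ ξ, ∑' η, Mq η * qrev q Mq η ξ = Mq ξ := by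
  intro ξ
  calc ∑' η, Mq η * qrev q Mq η ξ = ∑' η, Mq ξ * q ξ η :=
        tsum_congr fun η => Mq_mul_qrev q Mq hpos hfin η ξ
    _ = Mq ξ * ∑' η, q ξ η := ENNReal.tsum_mul_left
    _ = Mq ξ := by rw [hrow, mul_one]

theorem trace_invariance (q : E → E → ℝ≥0∞) (Mq : E → ℝ≥0∞) (S T : Set E)
    (hrow : ∀ η, ∑' ξ, q η ξ = 1)
    (hinv : ∀ ξ, ∑' η, Mq η * q η ξ = Mq ξ)
    (hpos : ∀ η, Mq η ≠ 0) (hfin : ∀ η, Mq η ≠ ⊤)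
    (htot : ∑' η, Mq η ≠ ⊤) (hT : T ⊆ S) :
    (∑' η, S.indicator (fun η => Mq η * ret q η S T) η) = ∑' ξ, T.indicator Mq ξ := by
  rw [weighted_ret q Mq hpos hfin S S T]
  refine tsum_congr fun ξ => ?_
  by_cases hξ : ξ ∈ T
  · rw [Set.indicator_of_mem hξ, Set.indicator_of_mem hξ,
      ret_self_eq_one (qrev q Mq) Mq S (qrev_row q Mq hinv hpos hfin)
        (qrev_inv q Mq hrow hpos hfin) hpos htot (hT hξ), mul_one]
  · rw [Set.indicator_of_notMem hξ, Set.indicator_of_notMem hξ]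

section Family
variable {κ : ℕ} (ℰ : Fin κ → Set E)

lemma ind_iUnion_split (hdis : Pairwise fun x y => Disjoint (ℰ x) (ℰ y)) (a : E) (w : ℝ≥0∞) (P : Prop) [Decidable P] :
    (if P ∧ a ∈ ⋃ x, ℰ x then w else 0) = ∑ x : Fin κ, if P ∧ a ∈ ℰ x then w else 0 := by
  by_cases hP : P
  · by_cases ha : a ∈ ⋃ x, ℰ x
    · obtain ⟨x₀, hx₀⟩ := Set.mem_iUnion.mp ha
      rw [if_pos ⟨hP, ha⟩, Finset.sum_eq_single x₀]
      · rw [if_pos ⟨hP, hx₀⟩]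
      · intro b _ hb
        exact if_neg fun h => Set.disjoint_left.mp (hdis hb) h.2 hx₀
      · intro h; exact absurd (Finset.mem_univ x₀) h
    · rw [if_neg fun h => ha h.2]
      symm
      exact Finset.sum_eq_zero fun x _ =>
        if_neg fun h => ha (Set.mem_iUnion.mpr ⟨x, h.2⟩)
  · rw [if_neg fun h => hP h.1]
    symm
    exact Finset.sum_eq_zero fun x _ => if_neg fun h => hP h.1

lemma ret_iUnion (hdis : Pairwise fun x y => Disjoint (ℰ x) (ℰ y)) (q : E → E → ℝ≥0∞) (η : E) (S : Set E) :
    ret q η S (⋃ x, ℰ x) = ∑ x : Fin κ, ret q η S (ℰ x) := by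
  rw [ret]
  have key : ∀ x : Σ n : ℕ, Fin (n + 2) → E,
      (if x.2 0 = η ∧ (∀ j : Fin (x.1 + 2), 0 < (j : ℕ) → (j : ℕ) < x.1 + 1 → x.2 j ∉ S) ∧
          x.2 (Fin.last (x.1 + 1)) ∈ ⋃ y, ℰ y
        then W q x.2 else 0)
      = ∑ y : Fin κ, (if x.2 0 = η ∧
          (∀ j : Fin (x.1 + 2), 0 < (j : ℕ) → (j : ℕ) < x.1 + 1 → x.2 j ∉ S) ∧
          x.2 (Fin.last (x.1 + 1)) ∈ ℰ y
        then W q x.2 else 0) := by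
    intro x
    have h1 := ind_iUnion_split ℰ hdis (x.2 (Fin.last (x.1 + 1))) (W q x.2)
      ((x.2 0 = η ∧ (∀ j : Fin (x.1 + 2), 0 < (j : ℕ) → (j : ℕ) < x.1 + 1 → x.2 j ∉ S)))
    calc _ = (if (x.2 0 = η ∧
          (∀ j : Fin (x.1 + 2), 0 < (j : ℕ) → (j : ℕ) < x.1 + 1 → x.2 j ∉ S)) ∧
          x.2 (Fin.last (x.1 + 1)) ∈ ⋃ y, ℰ y then W q x.2 else 0) := by
          rw [if_congr (Iff.symm and_assoc) rfl rfl]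
      _ = _ := by
          rw [h1]
          exact Finset.sum_congr rfl fun y _ => by rw [if_congr and_assoc rfl rfl]
  rw [tsum_congr key, Summable.tsum_finsetSum fun i _ => ENNReal.summable]
  rfl

lemma tsum_ind_iUnion (hdis : Pairwise fun x y => Disjoint (ℰ x) (ℰ y)) (F : E → ℝ≥0∞) :
    (∑' η, (⋃ x, ℰ x).indicator F η) = ∑ x : Fin κ, ∑' η, (ℰ x).indicator F η := by
  have key : ∀ η, (⋃ x, ℰ x).indicator F η = ∑ x : Fin κ, (ℰ x).indicator F η := by
    intro η
    have h1 := ind_iUnion_split ℰ hdis η (F η) True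
    simp only [true_and] at h1
    rw [Set.indicator_apply, h1]
    exact Finset.sum_congr rfl fun x _ => (Set.indicator_apply _ _ _).symm
  rw [tsum_congr key, Summable.tsum_finsetSum fun i _ => ENNReal.summable]

end Family

section Master
variable (q : E → E → ℝ≥0∞) (Mq : E → ℝ≥0∞) {κ : ℕ} (ℰ : Fin κ → Set E)

theorem master_a (hdis : Pairwise fun x y => Disjoint (ℰ x) (ℰ y))
    (hrow : ∀ η, ∑' ξ, q η ξ = 1)
    (hinv : ∀ ξ, ∑' η, Mq η * q η ξ = Mq ξ)
    (hpos : ∀ η, Mq η ≠ 0) (hfin : ∀ η, Mq η ≠ ⊤)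
    (htot : ∑' η, Mq η ≠ ⊤) (y : Fin κ) :
    (∑ x : Fin κ, ∑' η, (ℰ x).indicator
        (fun η => Mq η * ret q η (⋃ z, ℰ z) (ℰ y)) η)
      = ∑' ξ, (ℰ y).indicator Mq ξ := by
  rw [← tsum_ind_iUnion ℰ hdis (fun η => Mq η * ret q η (⋃ z, ℰ z) (ℰ y))]
  exact trace_invariance q Mq (⋃ z, ℰ z) (ℰ y) hrow hinv hpos hfin htot
    (Set.subset_iUnion ℰ y)

theorem master_b (hdis : Pairwise fun x y => Disjoint (ℰ x) (ℰ y))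
    (hrow : ∀ η, ∑' ξ, q η ξ = 1)
    (hinv : ∀ ξ, ∑' η, Mq η * q η ξ = Mq ξ)
    (hpos : ∀ η, Mq η ≠ 0)
    (htot : ∑' η, Mq η ≠ ⊤) (y : Fin κ) :
    (∑ x : Fin κ, ∑' η, (ℰ y).indicator
        (fun η => Mq η * ret q η (⋃ z, ℰ z) (ℰ x)) η)
      = ∑' ξ, (ℰ y).indicator Mq ξ := by
  rw [← Summable.tsum_finsetSum fun i _ => ENNReal.summable]
  refine tsum_congr fun η => ?_
  by_cases hη : η ∈ ℰ y
  · have hS : η ∈ ⋃ z, ℰ z := Set.mem_iUnion.mpr ⟨y, hη⟩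
    calc ∑ x : Fin κ, (ℰ y).indicator (fun η => Mq η * ret q η (⋃ z, ℰ z) (ℰ x)) η
        = ∑ x : Fin κ, Mq η * ret q η (⋃ z, ℰ z) (ℰ x) :=
          Finset.sum_congr rfl fun x _ => Set.indicator_of_mem hη _
      _ = Mq η * ∑ x : Fin κ, ret q η (⋃ z, ℰ z) (ℰ x) := (Finset.mul_sum _ _ _).symm
      _ = Mq η * ret q η (⋃ z, ℰ z) (⋃ z, ℰ z) := by
          rw [← ret_iUnion ℰ hdis q η (⋃ z, ℰ z)]
      _ = Mq η := by
          rw [ret_self_eq_one q Mq (⋃ z, ℰ z) hrow hinv hpos htot hS, mul_one]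
      _ = (ℰ y).indicator Mq η := (Set.indicator_of_mem hη _).symm
  · rw [Set.indicator_of_notMem hη]
    exact Finset.sum_eq_zero fun x _ => Set.indicator_of_notMem hη _

theorem master_fin (hdis : Pairwise fun x y => Disjoint (ℰ x) (ℰ y))
    (hrow : ∀ η, ∑' ξ, q η ξ = 1)
    (hinv : ∀ ξ, ∑' η, Mq η * q η ξ = Mq ξ)
    (hpos : ∀ η, Mq η ≠ 0) (hfin : ∀ η, Mq η ≠ ⊤)
    (htot : ∑' η, Mq η ≠ ⊤) (x y : Fin κ) :
    (∑' η, (ℰ x).indicator (fun η => Mq η * ret q η (⋃ z, ℰ z) (ℰ y)) η) ≠ ⊤ := by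
  intro h
  have hle : (∑' η, (ℰ x).indicator (fun η => Mq η * ret q η (⋃ z, ℰ z) (ℰ y)) η)
      ≤ ∑ x' : Fin κ, ∑' η, (ℰ x').indicator
          (fun η => Mq η * ret q η (⋃ z, ℰ z) (ℰ y)) η :=
    Finset.single_le_sum (f := fun x' : Fin κ => ∑' η, (ℰ x').indicator
      (fun η => Mq η * ret q η (⋃ z, ℰ z) (ℰ y)) η)
      (fun _ _ => zero_le) (Finset.mem_univ x)
  rw [master_a q Mq ℰ hdis hrow hinv hpos hfin htot y] at hle
  have h2 : (∑' ξ, (ℰ y).indicator Mq ξ) ≤ ∑' ξ, Mq ξ :=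
    ENNReal.tsum_le_tsum fun ξ => Set.indicator_le_self _ _ _
  exact htot (top_le_iff.mp ((h ▸ hle).trans h2))

end Master

end StmtAux

section RealFacts

open StmtAux ENNReal

variable {E : Type*} {R : E → E → ℝ} {μ : E → ℝ}

lemma lam_pos (hR : IsRateMatrix R) (η : E) : 0 < -R η η :=
  neg_pos.mpr (hR.diag_neg η)

lemma jumpProb_nonneg (hR : IsRateMatrix R) (η ξ : E) : 0 ≤ jumpProb R η ξ := by
  rw [jumpProb]
  split
  · exact le_rfl
  · next h => exact div_nonneg (hR.offdiag_nonneg η ξ h) (lam_pos hR η).le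

lemma jumpProb_eq (hR : IsRateMatrix R) (η ξ : E) :
    jumpProb R η ξ = R η ξ * (-R η η)⁻¹ + (if ξ = η then 1 else 0) := by
  rw [jumpProb]
  by_cases h : η = ξ
  · subst h
    rw [if_pos rfl, if_pos rfl]
    have hne : R η η ≠ 0 := (hR.diag_neg η).ne
    have : R η η * (-R η η)⁻¹ = -1 := by
      rw [inv_neg, mul_neg, mul_inv_cancel₀ hne]
    rw [this]; ring
  · rw [if_neg h, if_neg fun hh => h hh.symm, div_eq_mul_inv, add_zero]

lemma jumpProb_summable (hR : IsRateMatrix R) (η : E) : Summable (jumpProb R η) := by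
  have h1 := (hR.row_summable η).mul_right (-R η η)⁻¹
  have h2 : Summable fun ξ : E => if ξ = η then (1 : ℝ) else 0 :=
    (hasSum_ite_eq η (1 : ℝ)).summable
  exact (h1.add h2).congr fun ξ => (jumpProb_eq hR η ξ).symm

lemma jumpProb_tsum (hR : IsRateMatrix R) (η : E) : ∑' ξ, jumpProb R η ξ = 1 := by
  have h1 := (hR.row_summable η).mul_right (-R η η)⁻¹
  have h2 : Summable fun ξ : E => if ξ = η then (1 : ℝ) else 0 :=
    (hasSum_ite_eq η (1 : ℝ)).summable
  rw [tsum_congr fun ξ => jumpProb_eq hR η ξ, Summable.tsum_add h1 h2, tsum_mul_right,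
    hR.row_sum, zero_mul, zero_add, tsum_ite_eq]

lemma M_pos (hR : IsRateMatrix R) (hμ : IsStationaryRate R μ) (η : E) :
    0 < -R η η * μ η := mul_pos (lam_pos hR η) (hμ.pos η)

lemma M_mul_p (hR : IsRateMatrix R) (η ξ : E) :
    (-R η η * μ η) * jumpProb R η ξ
      = μ η * R η ξ + (if η = ξ then -R ξ ξ * μ ξ else 0) := by
  by_cases h : η = ξ
  · subst h
    rw [jumpProb, if_pos rfl, if_pos rfl, mul_zero]
    ring
  · rw [jumpProb, if_neg h, if_neg h, add_zero, div_eq_mul_inv]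
    have hne : -R η η ≠ 0 := (lam_pos hR η).ne'
    have h3 : -R η η * μ η * (R η ξ * (-R η η)⁻¹)
        = μ η * R η ξ * (-R η η * (-R η η)⁻¹) := by ring
    rw [h3, mul_inv_cancel₀ hne, mul_one]

lemma Mp_summable (hR : IsRateMatrix R) (hμ : IsStationaryRate R μ) (ξ : E) :
    Summable fun η => (-R η η * μ η) * jumpProb R η ξ := by
  have h2 : Summable fun η : E => if η = ξ then -R ξ ξ * μ ξ else 0 :=
    (hasSum_ite_eq ξ _).summable
  exact ((hμ.flux_summable ξ).add h2).congr fun η => (M_mul_p hR η ξ).symm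

lemma Mp_tsum (hR : IsRateMatrix R) (hμ : IsStationaryRate R μ) (ξ : E) :
    ∑' η, (-R η η * μ η) * jumpProb R η ξ = -R ξ ξ * μ ξ := by
  have h2 : Summable fun η : E => if η = ξ then -R ξ ξ * μ ξ else 0 :=
    (hasSum_ite_eq ξ _).summable
  rw [tsum_congr fun η => M_mul_p hR η ξ, Summable.tsum_add (hμ.flux_summable ξ) h2,
    hμ.stat ξ, zero_add, tsum_ite_eq]

lemma pathWeight_nonneg (hR : IsRateMatrix R) {n : ℕ} (γ : Fin (n + 1) → E) :
    0 ≤ pathWeight (jumpProb R) γ :=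
  Finset.prod_nonneg fun i _ => jumpProb_nonneg hR _ _

/-- the ENNReal lift of the jump kernel -/
def qE (R : E → E → ℝ) (a b : E) : ℝ≥0∞ := ENNReal.ofReal (jumpProb R a b)

/-- the ENNReal lift of the invariant measure of the jump chain -/
def MqE (R : E → E → ℝ) (μ : E → ℝ) (a : E) : ℝ≥0∞ := ENNReal.ofReal (-R a a * μ a)

lemma hrowE (hR : IsRateMatrix R) (η : E) : ∑' ξ, qE R η ξ = 1 := by
  calc ∑' ξ, qE R η ξ
      = ENNReal.ofReal (∑' ξ, jumpProb R η ξ) :=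
        (ENNReal.ofReal_tsum_of_nonneg (jumpProb_nonneg hR η) (jumpProb_summable hR η)).symm
    _ = 1 := by rw [jumpProb_tsum hR η, ENNReal.ofReal_one]

lemma hinvE (hR : IsRateMatrix R) (hμ : IsStationaryRate R μ) (ξ : E) :
    ∑' η, MqE R μ η * qE R η ξ = MqE R μ ξ := by
  calc ∑' η, MqE R μ η * qE R η ξ
      = ∑' η, ENNReal.ofReal ((-R η η * μ η) * jumpProb R η ξ) := by
        refine tsum_congr fun η => ?_
        rw [ENNReal.ofReal_mul (M_pos hR hμ η).le]
        rfl
    _ = ENNReal.ofReal (∑' η, (-R η η * μ η) * jumpProb R η ξ) :=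
        (ENNReal.ofReal_tsum_of_nonneg
          (fun η => mul_nonneg (M_pos hR hμ η).le (jumpProb_nonneg hR η ξ))
          (Mp_summable hR hμ ξ)).symm
    _ = MqE R μ ξ := by rw [Mp_tsum hR hμ ξ]; rfl

lemma hposE (hR : IsRateMatrix R) (hμ : IsStationaryRate R μ) (η : E) : MqE R μ η ≠ 0 := by
  rw [MqE]
  simp only [ne_eq, ENNReal.ofReal_eq_zero, not_le]
  exact M_pos hR hμ η

lemma hfinE (η : E) : MqE R μ η ≠ ⊤ := ENNReal.ofReal_ne_top

lemma htotE (hR : IsRateMatrix R) (hμ : IsStationaryRate R μ) :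
    ∑' η, MqE R μ η ≠ ⊤ := by
  rw [show (fun η => MqE R μ η) = fun η => ENNReal.ofReal (-R η η * μ η) from rfl,
    ← ENNReal.ofReal_tsum_of_nonneg (fun η => (M_pos hR hμ η).le) hμ.lam_summable]
  exact ENNReal.ofReal_ne_top

lemma W_ofReal (hR : IsRateMatrix R) {n : ℕ} (γ : Fin (n + 1) → E) :
    StmtAux.W (qE R) γ = ENNReal.ofReal (pathWeight (jumpProb R) γ) := by
  rw [StmtAux.W, pathWeight,
    ENNReal.ofReal_prod_of_nonneg fun i _ => jumpProb_nonneg hR _ _]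
  rfl

lemma retProb_eq_toReal (hR : IsRateMatrix R) (η : E) (S T : Set E) :
    retProb (jumpProb R) η S T = (ret (qE R) η S T).toReal := by
  rw [ret, ENNReal.tsum_toReal_eq fun x => ?_, retProb]
  · refine tsum_congr fun x => ?_
    split
    · rw [W_ofReal hR, ENNReal.toReal_ofReal (pathWeight_nonneg hR _)]
    · simp
  · split
    · rw [W_ofReal hR]; exact ENNReal.ofReal_ne_top
    · simp

end RealFacts



section Balance

open StmtAux ENNReal

variable {E : Type*} {R : E → E → ℝ} {μ : E → ℝ}

lemma freal_eq_toReal (hR : IsRateMatrix R) (hμ : IsStationaryRate R μ)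
    {κ : ℕ} (ℰ : Fin κ → Set E) (x y : Fin κ) :
    (∑' η : ℰ x, (-R η.1 η.1 * μ η.1 * retProb (jumpProb R) η.1 (⋃ z, ℰ z) (ℰ y)))
      = (∑' η, (ℰ x).indicator
          (fun η => MqE R μ η * ret (qE R) η (⋃ z, ℰ z) (ℰ y)) η).toReal := by
  rw [← tsum_subtype (ℰ x) (fun η => MqE R μ η * ret (qE R) η (⋃ z, ℰ z) (ℰ y))]
  have hfin : ∀ η : ℰ x, MqE R μ η.1 * ret (qE R) η.1 (⋃ z, ℰ z) (ℰ y) ≠ ⊤ := by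
    intro η
    exact ENNReal.mul_ne_top (hfinE _)
      (ne_top_of_le_ne_top ENNReal.one_ne_top
        (ret_le_one (hrowE hR) (⋃ z, ℰ z) (ℰ y) (Set.subset_iUnion ℰ y) η.1))
  rw [ENNReal.tsum_toReal_eq hfin]
  refine tsum_congr fun η => ?_
  rw [ENNReal.toReal_mul, ← retProb_eq_toReal hR]
  rw [show (MqE R μ η.1).toReal = -R η.1 η.1 * μ η.1 from
    ENNReal.toReal_ofReal (M_pos hR hμ η.1).le]

theorem key_balance (hR : IsRateMatrix R) (hμ : IsStationaryRate R μ)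
    {κ : ℕ} (ℰ : Fin κ → Set E)
    (hdis : Pairwise fun x y => Disjoint (ℰ x) (ℰ y)) (y : Fin κ) :
    (∑ x ∈ Finset.univ.erase y,
        ∑' η : ℰ x, (-R η.1 η.1 * μ η.1 * retProb (jumpProb R) η.1 (⋃ z, ℰ z) (ℰ y)))
      = ∑ x ∈ Finset.univ.erase y,
        ∑' η : ℰ y, (-R η.1 η.1 * μ η.1 * retProb (jumpProb R) η.1 (⋃ z, ℰ z) (ℰ x)) := by
  set F : Fin κ → Fin κ → ℝ≥0∞ := fun x y => ∑' η, (ℰ x).indicator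
    (fun η => MqE R μ η * ret (qE R) η (⋃ z, ℰ z) (ℰ y)) η with hF
  set f : Fin κ → Fin κ → ℝ := fun x y =>
    ∑' η : ℰ x, (-R η.1 η.1 * μ η.1 * retProb (jumpProb R) η.1 (⋃ z, ℰ z) (ℰ y)) with hf
  have hfF : ∀ x y : Fin κ, f x y = (F x y).toReal := fun x y =>
    freal_eq_toReal hR hμ ℰ x y
  have hFfin : ∀ x y : Fin κ, F x y ≠ ⊤ := fun x y =>
    master_fin (qE R) (MqE R μ) ℰ hdis (hrowE hR) (hinvE hR hμ) (hposE hR hμ)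
      (fun _ => hfinE _) (htotE hR hμ) x y
  have huniv : (∑ x : Fin κ, f x y) = ∑ x : Fin κ, f y x := by
    rw [Finset.sum_congr rfl fun x _ => hfF x y,
      Finset.sum_congr rfl fun x _ => hfF y x,
      ← ENNReal.toReal_sum fun x _ => hFfin x y,
      ← ENNReal.toReal_sum fun x _ => hFfin y x]
    congr 1
    rw [master_a (qE R) (MqE R μ) ℰ hdis (hrowE hR) (hinvE hR hμ) (hposE hR hμ)
        (fun _ => hfinE _) (htotE hR hμ) y,
      master_b (qE R) (MqE R μ) ℰ hdis (hrowE hR) (hinvE hR hμ) (hposE hR hμ)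
        (htotE hR hμ) y]
  have h1 := Finset.add_sum_erase Finset.univ (fun x => f x y) (Finset.mem_univ y)
  have h2 := Finset.add_sum_erase Finset.univ (fun x => f y x) (Finset.mem_univ y)
  linarith [h1, h2, huniv]

end Balance

/-- Part of Proposition 2.3: under (H0) and (H1), if `μ_N(ℰ^x_N) → m(x) > 0` for every `x`
and the asymptotic rates satisfy `Σ_{y≠x} r(x,y) > 0` for every `x` (no absorbing states),
then `m` is a stationary measure for the asymptotic dynamics with rates `r`:
`Σ_{y≠x} m(y) r(y,x) = m(x) Σ_{y≠x} r(x,y)` for every `x`. -/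
theorem stmt5 {E : ℕ → Type*} [∀ N, Countable (E N)]
    (R : ∀ N, E N → E N → ℝ) (μ : ∀ N, E N → ℝ)
    (hR : ∀ N, IsRateMatrix (R N)) (hirr : ∀ N, MCIrreducible (jumpProb (R N)))
    (hμ : ∀ N, IsStationaryRate (R N) (μ N))
    (κ : ℕ) (hκ : 2 ≤ κ) (ℰ : ∀ N, Fin κ → Set (E N))
    (hdis : ∀ N, Pairwise fun x y => Disjoint (ℰ N x) (ℰ N y))
    (hne : ∀ N x, (ℰ N x).Nonempty)
    (θ : ℕ → ℝ) (hθ : ∀ N, 0 < θ N) (r : Fin κ → Fin κ → ℝ)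
    (hH0 : ∀ x y : Fin κ, x ≠ y →
      Tendsto (fun N => θ N * meanRate (R N) (μ N) (ℰ N x) (⋃ z, ℰ N z) (ℰ N y))
        atTop (𝓝 (r x y)))
    (hH1 : ∀ x : Fin κ, ∃ ξ : ∀ N, E N, (∀ N, ξ N ∈ ℰ N x) ∧
      Tendsto
        (fun N => cap (jumpProb (R N)) (fun η => -R N η η * μ N η)
            (ℰ N x) ((⋃ y, ℰ N y) \ ℰ N x)
          / ⨅ η : {η : E N // η ∈ ℰ N x ∧ η ≠ ξ N},
              cap (jumpProb (R N)) (fun η => -R N η η * μ N η) {η.1} {ξ N})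
        atTop (𝓝 0))
    (m : Fin κ → ℝ) (hm : ∀ x, Tendsto (fun N => ∑' η : ℰ N x, μ N η.1) atTop (𝓝 (m x)))
    (hmpos : ∀ x, 0 < m x)
    (hnoabs : ∀ x : Fin κ, 0 < ∑ y ∈ Finset.univ.erase x, r x y) :
    ∀ x : Fin κ,
      ∑ y ∈ Finset.univ.erase x, m y * r y x = m x * ∑ y ∈ Finset.univ.erase x, r x y := by
  intro x₀
  set fre : ℕ → Fin κ → Fin κ → ℝ := fun N a b =>
    ∑' η : ℰ N a, (-R N η.1 η.1 * μ N η.1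
      * retProb (jumpProb (R N)) η.1 (⋃ z, ℰ N z) (ℰ N b)) with hfre
  have hbal : ∀ N, (∑ x ∈ Finset.univ.erase x₀, fre N x x₀)
      = ∑ x ∈ Finset.univ.erase x₀, fre N x₀ x := fun N =>
    key_balance (hR N) (hμ N) (ℰ N) (hdis N) x₀
  have hμpos : ∀ (N : ℕ) (a : Fin κ), 0 < ∑' η : ℰ N a, μ N η.1 := by
    intro N a
    obtain ⟨pt, hpt⟩ := hne N a
    exact Summable.tsum_pos ((hμ N).summable.subtype _) (fun η => ((hμ N).pos η.1).le)
      ⟨pt, hpt⟩ ((hμ N).pos pt)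
  have hfremean : ∀ (N : ℕ) (a b : Fin κ),
      fre N a b = (∑' η : ℰ N a, μ N η.1)
        * meanRate (R N) (μ N) (ℰ N a) (⋃ z, ℰ N z) (ℰ N b) := by
    intro N a b
    rw [meanRate, ← mul_assoc, mul_inv_cancel₀ (hμpos N a).ne', one_mul, hfre]
  have htends : ∀ a b : Fin κ, a ≠ b →
      Tendsto (fun N => θ N * fre N a b) atTop (𝓝 (m a * r a b)) := by
    intro a b hab
    have h1 : (fun N => θ N * fre N a b)
        = fun N => (∑' η : ℰ N a, μ N η.1)
            * (θ N * meanRate (R N) (μ N) (ℰ N a) (⋃ z, ℰ N z) (ℰ N b)) := by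
      funext N; rw [hfremean N a b]; ring
    rw [h1]
    exact (hm a).mul (hH0 a b hab)
  have hL : Tendsto (fun N => θ N * ∑ x ∈ Finset.univ.erase x₀, fre N x x₀) atTop
      (𝓝 (∑ x ∈ Finset.univ.erase x₀, m x * r x x₀)) := by
    have h2 : (fun N => θ N * ∑ x ∈ Finset.univ.erase x₀, fre N x x₀)
        = fun N => ∑ x ∈ Finset.univ.erase x₀, θ N * fre N x x₀ := by
      funext N; rw [Finset.mul_sum]
    rw [h2]
    exact tendsto_finset_sum _ fun x hx =>
      htends x x₀ (Finset.ne_of_mem_erase hx)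
  have hRt : Tendsto (fun N => θ N * ∑ x ∈ Finset.univ.erase x₀, fre N x₀ x) atTop
      (𝓝 (∑ x ∈ Finset.univ.erase x₀, m x₀ * r x₀ x)) := by
    have h2 : (fun N => θ N * ∑ x ∈ Finset.univ.erase x₀, fre N x₀ x)
        = fun N => ∑ x ∈ Finset.univ.erase x₀, θ N * fre N x₀ x := by
      funext N; rw [Finset.mul_sum]
    rw [h2]
    exact tendsto_finset_sum _ fun x hx =>
      htends x₀ x (Finset.ne_of_mem_erase hx).symm
  have heq : (fun N => θ N * ∑ x ∈ Finset.univ.erase x₀, fre N x x₀)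
      = fun N => θ N * ∑ x ∈ Finset.univ.erase x₀, fre N x₀ x := by
    funext N; rw [hbal N]
  have hfinal := tendsto_nhds_unique (heq ▸ hL) hRt
  rw [hfinal, Finset.mul_sum]
end
end
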